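/- arXiv:2306.12157 — 7 statements merged into one kernel-verified Lean document; each statement's English description precedes it below -/
import Mathlib

section
/- For any vector y in R^3 with |y| > a > 0, the integral over the ball B_a = {y' : |y'| < a} of 1/|y - y'|^4 dy' equals (2π/(|y| - a)) · [1/(t+1) + ((t-1)/(2t))·log((t-1)/(t+1))] evaluated at t = |y|/a. -/
open MeasureTheory Real

lemma lem1 (c ρ : ℝ) (hc : 0 < c) :
    ∫ r in (0:ℝ)..ρ, r * (((c^2 + r^2)^2)⁻¹) =
      (1/2) * ((c^2)⁻¹ - (c^2 + ρ^2)⁻¹) := by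
  have key : ∀ r : ℝ, HasDerivAt (fun r => -(1/2) * (c^2 + r^2)⁻¹)
      (r * (((c^2 + r^2)^2)⁻¹)) r := by
    intro r
    have h0 : c^2 + r^2 ≠ 0 := by positivity
    have h1 : HasDerivAt (fun r : ℝ => c^2 + r^2) (2*r) r := by
      simpa using ((hasDerivAt_pow 2 r).const_add (c^2))
    have h2 := (h1.inv h0).const_mul (-(1/2) : ℝ)
    exact h2.congr_deriv (by ring)
  rw [intervalIntegral.integral_eq_sub_of_hasDerivAt (fun x _ => key x) ?_]
  · ring
  · apply ContinuousOn.intervalIntegrable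
    apply ContinuousOn.mul continuousOn_id
    apply ContinuousOn.inv₀ (by fun_prop)
    intro x _; positivity

lemma lem2 (a R : ℝ) (ha : 0 < a) (hR : a < R) :
    ∫ t in (-a)..a, (((R-t)^2)⁻¹ - (R^2 - 2*R*t + a^2)⁻¹) =
      ((R-a)⁻¹ - (R+a)⁻¹) + (1/(2*R)) * (Real.log ((R-a)^2) - Real.log ((R+a)^2)) := by
  have hRpos : 0 < R := ha.trans hR
  have hq : ∀ t ∈ Set.uIcc (-a) a, 0 < R^2 - 2*R*t + a^2 := by
    intro t ht
    rw [Set.uIcc_of_le (by linarith)] at ht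
    nlinarith [ht.1, ht.2]
  have hrt : ∀ t ∈ Set.uIcc (-a) a, R - t ≠ 0 := by
    intro t ht
    rw [Set.uIcc_of_le (by linarith)] at ht
    nlinarith [ht.2]
  have key : ∀ t ∈ Set.uIcc (-a) a, HasDerivAt
      (fun t => (R-t)⁻¹ + (1/(2*R)) * Real.log (R^2 - 2*R*t + a^2))
      (((R-t)^2)⁻¹ - (R^2 - 2*R*t + a^2)⁻¹) t := by
    intro t ht
    have h1 : HasDerivAt (fun t : ℝ => R - t) (-1) t := by
      simpa using (hasDerivAt_id t).const_sub R
    have h2 := h1.inv (hrt t ht)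
    have h3 : HasDerivAt (fun t : ℝ => R^2 - 2*R*t + a^2) (-(2*R)) t := by
      have := ((hasDerivAt_id t).const_mul (2*R)).const_sub (R^2)
      simpa using this.add_const (a^2)
    have h4 := (h3.log (hq t ht).ne').const_mul (1/(2*R))
    refine (h2.add h4).congr_deriv ?_
    field_simp
    ring
  rw [intervalIntegral.integral_eq_sub_of_hasDerivAt key ?_]
  · have e1 : R^2 - 2*R*a + a^2 = (R-a)^2 := by ring
    have e2 : R^2 - 2*R*(-a) + a^2 = (R+a)^2 := by ring
    rw [e1, e2]
    ring
  · apply ContinuousOn.intervalIntegrable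
    apply ContinuousOn.sub
    · exact ContinuousOn.inv₀ (by fun_prop) (fun t ht => pow_ne_zero 2 (hrt t ht))
    · exact ContinuousOn.inv₀ (by fun_prop) (fun t ht => (hq t ht).ne')

lemma ball2vol : (volume (Metric.ball (0 : EuclideanSpace ℝ (Fin 2)) 1)).toReal = π := by
  rw [EuclideanSpace.volume_ball]
  have hG : Real.Gamma ((2:ℕ) / 2 + 1) = 1 := by
    rw [show (((2:ℕ):ℝ) / 2 + 1 : ℝ) = ((1:ℕ):ℝ) + 1 by push_cast; norm_num,
      Real.Gamma_nat_eq_factorial]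
    norm_num
  simp only [Fintype.card_fin, hG]
  simp [Real.sq_sqrt Real.pi_nonneg, ENNReal.toReal_ofReal Real.pi_nonneg]

noncomputable def e3 : EuclideanSpace ℝ (Fin 3) ≃ᵐ (Fin 3 → ℝ) := (MeasurableEquiv.toLp 2 _).symm

noncomputable def eπ : (Fin 3 → ℝ) ≃ᵐ ℝ × (Fin 2 → ℝ) :=
  MeasurableEquiv.piFinSuccAbove (fun _ => ℝ) 0

noncomputable def e2 : EuclideanSpace ℝ (Fin 2) ≃ᵐ (Fin 2 → ℝ) := (MeasurableEquiv.toLp 2 _).symm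

lemma norm3sq (x : EuclideanSpace ℝ (Fin 3)) : ‖x‖^2 = (x 0)^2 + (x 1)^2 + (x 2)^2 := by
  rw [EuclideanSpace.norm_eq, Real.sq_sqrt (by positivity)]
  simp [Fin.sum_univ_three, sq_abs]

lemma norm2sq (v : EuclideanSpace ℝ (Fin 2)) : ‖v‖^2 = (v 0)^2 + (v 1)^2 := by
  rw [EuclideanSpace.norm_eq, Real.sq_sqrt (by positivity)]
  simp [Fin.sum_univ_two, sq_abs]

lemma lem3 (a R t : ℝ) (ha : 0 < a) (hR : a < R) :
    ∫ v : EuclideanSpace ℝ (Fin 2),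
      (if t^2 + ‖v‖^2 < a^2 then (((R-t)^2 + ‖v‖^2)^2)⁻¹ else 0) =
    if t^2 < a^2 then π * (((R-t)^2)⁻¹ - (R^2 - 2*R*t + a^2)⁻¹) else 0 := by
  set g : ℝ → ℝ := fun r => if t^2 + r^2 < a^2 then (((R-t)^2 + r^2)^2)⁻¹ else 0 with hg
  have h0 : ∫ v : EuclideanSpace ℝ (Fin 2),
      (if t^2 + ‖v‖^2 < a^2 then (((R-t)^2 + ‖v‖^2)^2)⁻¹ else 0) = ∫ v, g ‖v‖ := rfl
  rw [h0]
  have h1 := MeasureTheory.integral_fun_norm_addHaar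
    (volume : Measure (EuclideanSpace ℝ (Fin 2))) g
  simp only [finrank_euclideanSpace_fin] at h1
  rw [h1, measureReal_def, ball2vol]
  by_cases hc : t^2 < a^2
  · rw [if_pos hc]
    have htR : 0 < R - t := by nlinarith
    set ρ := Real.sqrt (a^2 - t^2) with hρdef
    have hρ2 : ρ^2 = a^2 - t^2 := Real.sq_sqrt (by linarith)
    have hρ : 0 < ρ := Real.sqrt_pos.mpr (by linarith)
    have key : ∀ r ∈ Set.Ioi (0:ℝ), r ^ 1 • g r =
        (Set.Iio ρ).indicator (fun r => r * (((R-t)^2 + r^2)^2)⁻¹) r := by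
      intro r hr
      simp only [Set.mem_Ioi] at hr
      rw [Set.indicator_apply]
      simp only [hg, pow_one, smul_eq_mul, Set.mem_Iio]
      by_cases hrρ : r < ρ
      · rw [if_pos hrρ, if_pos (by nlinarith)]
      · rw [if_neg hrρ, if_neg (by push_neg at hrρ ⊢; nlinarith), mul_zero]
    rw [setIntegral_congr_fun measurableSet_Ioi key,
      setIntegral_indicator measurableSet_Iio, Set.Ioi_inter_Iio,
      ← MeasureTheory.integral_Ioc_eq_integral_Ioo,
      ← intervalIntegral.integral_of_le hρ.le, lem1 _ _ htR]
    rw [hρ2]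
    have : (R-t)^2 + (a^2 - t^2) = R^2 - 2*R*t + a^2 := by ring
    rw [this]
    simp only [smul_eq_mul, nsmul_eq_mul]
    push_cast
    ring
  · rw [if_neg hc]
    have key : ∀ r ∈ Set.Ioi (0:ℝ), r ^ 1 • g r = 0 := by
      intro r hr
      simp only [Set.mem_Ioi] at hr
      simp only [hg, smul_eq_mul]
      rw [if_neg (by nlinarith), mul_zero]
    rw [setIntegral_congr_fun measurableSet_Ioi key]
    simp

lemma key (a R : ℝ) (ha : 0 < a) (hR : a < R) :
    ∫ y' in Metric.ball (0 : EuclideanSpace ℝ (Fin 3)) a,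
      (‖(R • EuclideanSpace.single 0 1 : EuclideanSpace ℝ (Fin 3)) - y'‖ ^ 4)⁻¹
    = π * (((R-a)⁻¹ - (R+a)⁻¹) +
        (1/(2*R)) * (Real.log ((R-a)^2) - Real.log ((R+a)^2))) := by
  classical
  set z : EuclideanSpace ℝ (Fin 3) := R • EuclideanSpace.single 0 1 with hz
  set F : EuclideanSpace ℝ (Fin 3) → ℝ := fun x => (‖z - x‖ ^ 4)⁻¹ with hF
  set I : EuclideanSpace ℝ (Fin 3) → ℝ := (Metric.ball (0:EuclideanSpace ℝ (Fin 3)) a).indicator F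
    with hI
  -- basic positivity
  have hRpos : 0 < R := ha.trans hR
  -- norm of z - x
  have hzx : ∀ x : EuclideanSpace ℝ (Fin 3),
      ‖z - x‖^2 = (R - x 0)^2 + (x 1)^2 + (x 2)^2 := by
    intro x
    rw [norm3sq]
    have h0 : (z - x) 0 = R - x 0 := by simp [hz, EuclideanSpace.single_apply]
    have h1 : (z - x) 1 = - x 1 := by simp [hz, EuclideanSpace.single_apply]
    have h2 : (z - x) 2 = - x 2 := by simp [hz, EuclideanSpace.single_apply]
    rw [h0, h1, h2]; ring
  -- integrability of I
  have hFmeas : Measurable F := (((measurable_const.sub measurable_id).norm).pow_const 4).inv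
  have hIint : Integrable I volume := by
    rw [hI, integrable_indicator_iff measurableSet_ball]
    apply Measure.integrableOn_of_bounded (M := ((R-a)^4)⁻¹) measure_ball_lt_top.ne
      hFmeas.aestronglyMeasurable
    filter_upwards [ae_restrict_mem measurableSet_ball] with x hx
    rw [mem_ball_zero_iff] at hx
    have h1 : R - a ≤ ‖z - x‖ := by
      have := norm_sub_norm_le z x
      have hzn : ‖z‖ = R := by
        rw [hz, norm_smul]
        simp [EuclideanSpace.norm_single, abs_of_pos hRpos]
      nlinarith [norm_nonneg (z - x)]
    have h2 : (0:ℝ) < R - a := by linarith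
    rw [hF, Real.norm_eq_abs, abs_of_nonneg (by positivity)]
    apply inv_anti₀ (by positivity)
    exact pow_le_pow_left₀ h2.le h1 4
  -- step 1: set integral to indicator integral
  rw [← integral_indicator measurableSet_ball, ← hF, ← hI]
  -- step 2: transport through e3.symm then eπ.symm
  have m3 : MeasurePreserving (⇑e3.symm) volume volume :=
    (EuclideanSpace.volume_preserving_symm_measurableEquiv_toLp (Fin 3)).symm
  have mπ : MeasurePreserving (⇑eπ.symm) volume volume :=
    (volume_preserving_piFinSuccAbove (fun _ : Fin 3 => ℝ) 0).symm
  rw [← m3.integral_comp' I]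
  rw [← mπ.integral_comp' (fun x => I (e3.symm x))]
  -- step 3: Fubini
  have hint2 : Integrable (fun p : ℝ × (Fin 2 → ℝ) => I (e3.symm (eπ.symm p))) volume := by
    have := (mπ.integrable_comp_emb eπ.symm.measurableEmbedding
      (g := fun x => I (e3.symm x))).mpr
    apply this
    exact (m3.integrable_comp_emb e3.symm.measurableEmbedding).mpr hIint
  rw [Measure.volume_eq_prod] at hint2 ⊢
  rw [integral_prod _ hint2]
  -- step 4: compute inner integral
  have inner_eq : ∀ t : ℝ, (∫ w : Fin 2 → ℝ, I (e3.symm (eπ.symm (t, w)))) =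
      if t^2 < a^2 then π * (((R-t)^2)⁻¹ - (R^2 - 2*R*t + a^2)⁻¹) else 0 := by
    intro t
    have m2 : MeasurePreserving (⇑e2) volume volume :=
      EuclideanSpace.volume_preserving_symm_measurableEquiv_toLp (Fin 2)
    rw [← m2.integral_comp' (fun w => I (e3.symm (eπ.symm (t, w))))]
    rw [← lem3 a R t ha hR]
    apply integral_congr_ae
    filter_upwards with v
    -- coords
    have hx0 : (e3.symm (eπ.symm (t, e2 v))) 0 = t := rfl
    have hx1 : (e3.symm (eπ.symm (t, e2 v))) 1 = v 0 := rfl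
    have hx2 : (e3.symm (eπ.symm (t, e2 v))) 2 = v 1 := rfl
    set x := e3.symm (eπ.symm (t, e2 v)) with hxdef
    have hmem : x ∈ Metric.ball (0:EuclideanSpace ℝ (Fin 3)) a ↔ t^2 + ‖v‖^2 < a^2 := by
      rw [mem_ball_zero_iff]
      constructor
      · intro h
        have := norm3sq x
        rw [hx0, hx1, hx2] at this
        rw [norm2sq]
        nlinarith [norm_nonneg x]
      · intro h
        have hns := norm3sq x
        rw [hx0, hx1, hx2] at hns
        rw [norm2sq] at h
        nlinarith [norm_nonneg x, ha]
    have hFx : F x = (((R-t)^2 + ‖v‖^2)^2)⁻¹ := by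
      show (‖z - x‖ ^ 4)⁻¹ = _
      have h4 : ‖z - x‖^4 = (‖z - x‖^2)^2 := by ring
      rw [h4, hzx x, hx0, hx1, hx2, norm2sq]
      ring_nf
    rw [hI, Set.indicator_apply]
    by_cases hmemb : x ∈ Metric.ball (0:EuclideanSpace ℝ (Fin 3)) a
    · rw [if_pos hmemb, if_pos (hmem.mp hmemb), hFx]
    · rw [if_neg hmemb, if_neg (fun h => hmemb (hmem.mpr h))]
  have : (fun t : ℝ => ∫ w : Fin 2 → ℝ, I (e3.symm (eπ.symm (t, w)))) =
      fun t => if t^2 < a^2 then π * (((R-t)^2)⁻¹ - (R^2 - 2*R*t + a^2)⁻¹) else 0 :=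
    funext inner_eq
  rw [this]
  -- step 5: outer integral
  have hind : (fun t : ℝ => if t^2 < a^2 then π * (((R-t)^2)⁻¹ - (R^2 - 2*R*t + a^2)⁻¹) else 0) =
      (Set.Ioo (-a) a).indicator
        (fun t => π * (((R-t)^2)⁻¹ - (R^2 - 2*R*t + a^2)⁻¹)) := by
    funext t
    rw [Set.indicator_apply]
    by_cases h : t ∈ Set.Ioo (-a) a
    · rw [if_pos (by obtain ⟨h1, h2⟩ := h; nlinarith), if_pos h]
    · have h2 : ¬ (t^2 < a^2) := by
        rw [Set.mem_Ioo] at h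
        push_neg at h
        rcases lt_or_ge (-a) t with h1 | h1
        · nlinarith [h h1]
        · nlinarith
      rw [if_neg h2, if_neg h]
  rw [hind, integral_indicator measurableSet_Ioo, ← integral_Ioc_eq_integral_Ioo,
    ← intervalIntegral.integral_of_le (by linarith : -a ≤ a),
    intervalIntegral.integral_const_mul, lem2 a R ha hR]

theorem stmt0 (a : ℝ) (ha : 0 < a) (y : EuclideanSpace ℝ (Fin 3)) (hy : a < ‖y‖) :
    ∫ y' in Metric.ball (0 : EuclideanSpace ℝ (Fin 3)) a, 1 / ‖y - y'‖ ^ 4 =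
      (2 * π / (‖y‖ - a)) *
        (1 / (‖y‖ / a + 1) +
          ((‖y‖ / a - 1) / (2 * (‖y‖ / a))) * Real.log ((‖y‖ / a - 1) / (‖y‖ / a + 1))) := by
  set R := ‖y‖ with hRdef
  have hRpos : 0 < R := ha.trans hy
  set z : EuclideanSpace ℝ (Fin 3) := R • EuclideanSpace.single 0 1 with hz
  have hzn : ‖z‖ = ‖y‖ := by
    rw [hz, norm_smul]
    simp [EuclideanSpace.norm_single, abs_of_pos hRpos]
    exact hRdef
  set T := (Submodule.reflection (ℝ ∙ (z - y))ᗮ : EuclideanSpace ℝ (Fin 3) ≃ₗᵢ[ℝ]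
    EuclideanSpace ℝ (Fin 3)) with hT
  have hTz : T z = y := Submodule.reflection_sub hzn
  have hpre : ⇑T ⁻¹' (Metric.ball (0 : EuclideanSpace ℝ (Fin 3)) a) =
      Metric.ball (0 : EuclideanSpace ℝ (Fin 3)) a := by
    ext u
    simp only [Set.mem_preimage, mem_ball_zero_iff]
    rw [T.norm_map]
  have hcv := T.measurePreserving.setIntegral_preimage_emb
    T.toHomeomorph.measurableEmbedding (fun y' => 1 / ‖y - y'‖ ^ 4)
    (Metric.ball (0 : EuclideanSpace ℝ (Fin 3)) a)
  rw [hpre] at hcv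
  rw [← hcv]
  have hfun : ∀ x : EuclideanSpace ℝ (Fin 3), 1 / ‖y - T x‖ ^ 4 = (‖z - x‖ ^ 4)⁻¹ := by
    intro x
    rw [← hTz, ← map_sub, T.norm_map, one_div]
  simp only [hfun]
  rw [key a R ha hy]
  -- algebra
  have ha' : a ≠ 0 := ha.ne'
  have hma : R - a ≠ 0 := by intro h; rw [sub_eq_zero] at h; exact absurd h.symm hy.ne
  have hmapos : 0 < R - a := by linarith
  have hpa : (0:ℝ) < R + a := by linarith
  have harg : (R / a - 1) / (R / a + 1) = (R - a) / (R + a) := by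
    rw [div_sub' ha', div_add' _ _ _ ha']
    rw [div_div_div_cancel_right₀]
    · ring_nf
    · exact ha'
  rw [harg]
  have hlog1 : Real.log ((R-a)^2) = 2 * Real.log (R-a) := by
    rw [Real.log_pow]; norm_num
  have hlog2 : Real.log ((R+a)^2) = 2 * Real.log (R+a) := by
    rw [Real.log_pow]; norm_num
  have hlogd : Real.log ((R-a)/(R+a)) = Real.log (R-a) - Real.log (R+a) :=
    Real.log_div hma hpa.ne'
  rw [hlog1, hlog2, hlogd]
  set L1 := Real.log (R - a)
  set L2 := Real.log (R + a)
  field_simp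
  ring
end

section
/- The function t ↦ 1/(t+1) + ((t-1)/(2t))·log((t-1)/(t+1)) is positive and strictly decreasing on the interval (1, ∞). -/
open Real Filter

noncomputable def Fn : ℝ → ℝ :=
  fun t : ℝ => 1 / (t + 1) + ((t - 1) / (2 * t)) * Real.log ((t - 1) / (t + 1))

lemma Fn_hasDeriv {t : ℝ} (ht : 1 < t) :
    HasDerivAt Fn
      (-(1 / (t + 1) ^ 2) + (1 / (2 * t ^ 2) * Real.log ((t - 1) / (t + 1))
        + (t - 1) / (2 * t) * (2 / ((t - 1) * (t + 1))))) t := by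
  have ht0 : (0:ℝ) < t := lt_trans one_pos ht
  have ht1 : t - 1 > 0 := by linarith
  have ht2 : t + 1 > 0 := by linarith
  have hq : (t - 1) / (t + 1) > 0 := div_pos ht1 ht2
  have h1 : HasDerivAt (fun t : ℝ => 1 / (t + 1)) (-(1 / (t + 1) ^ 2)) t := by
    have := ((hasDerivAt_id t).add_const 1).fun_inv (by simp; intro h; linarith)
    simpa [one_div, neg_div] using this
  have h2 : HasDerivAt (fun t : ℝ => (t - 1) / (2 * t)) (1 / (2 * t ^ 2)) t := by
    have := ((hasDerivAt_id t).sub_const 1).div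
      ((hasDerivAt_id t).const_mul 2) (by simp; positivity)
    refine this.congr_deriv ?_
    simp only [id]
    field_simp
    ring
  have hq' : HasDerivAt (fun t : ℝ => (t - 1) / (t + 1)) (2 / (t + 1) ^ 2) t := by
    have := ((hasDerivAt_id t).sub_const 1).div ((hasDerivAt_id t).add_const 1)
      (by simp; intro h; linarith)
    refine this.congr_deriv ?_
    simp only [id]
    field_simp
    ring
  have h3 : HasDerivAt (fun t : ℝ => Real.log ((t - 1) / (t + 1)))
      (2 / ((t - 1) * (t + 1))) t := by
    have := (Real.hasDerivAt_log (ne_of_gt hq)).comp t hq'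
    refine this.congr_deriv ?_
    field_simp
  have := h1.add ((h2.mul h3))
  exact this

lemma Fn_deriv_neg {t : ℝ} (ht : 1 < t) : deriv Fn t < 0 := by
  have ht0 : (0:ℝ) < t := lt_trans one_pos ht
  have ht1 : t - 1 > 0 := by linarith
  have ht2 : t + 1 > 0 := by linarith
  have hq : (t - 1) / (t + 1) > 0 := div_pos ht1 ht2
  rw [(Fn_hasDeriv ht).deriv]
  have hne : (t - 1) / (t + 1) ≠ 1 := by
    intro h
    rw [div_eq_one_iff_eq (by positivity : (t:ℝ) + 1 ≠ 0)] at h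
    linarith
  have heq : (t - 1) / (t + 1) - 1 = -(2 / (t + 1)) := by
    field_simp
    ring
  have hlog : Real.log ((t - 1) / (t + 1)) < -(2 / (t + 1)) := by
    have h := Real.log_lt_sub_one_of_pos hq hne
    linarith [heq ▸ h]
  have hc : (0:ℝ) < 1 / (2 * t ^ 2) := by positivity
  have key : 1 / (2 * t ^ 2) * Real.log ((t - 1) / (t + 1))
      < 1 / (2 * t ^ 2) * (-(2 / (t + 1))) :=
    mul_lt_mul_of_pos_left hlog hc
  have hrest : -(1 / (t + 1) ^ 2) + (1 / (2 * t ^ 2) * (-(2 / (t + 1)))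
      + (t - 1) / (2 * t) * (2 / ((t - 1) * (t + 1)))) = -(1 / (t ^ 2 * (t + 1) ^ 2)) := by
    field_simp
    ring
  have h0 : (0:ℝ) < 1 / (t ^ 2 * (t + 1) ^ 2) := by positivity
  linarith

lemma Fn_anti : StrictAntiOn Fn (Set.Ioi (1:ℝ)) := by
  apply strictAntiOn_of_deriv_neg (convex_Ioi 1)
  · exact fun x hx => ((Fn_hasDeriv hx).differentiableAt.continuousAt).continuousWithinAt
  · rw [interior_Ioi]
    exact fun x hx => Fn_deriv_neg hx

lemma Fn_tendsto : Tendsto Fn atTop (nhds 0) := by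
  have h1 : Tendsto (fun t : ℝ => 1 / (t + 1)) atTop (nhds 0) := by
    have := (tendsto_atTop_add_const_right atTop (1:ℝ) tendsto_id).inv_tendsto_atTop
    simpa [one_div, Pi.inv_def] using this
  have hinv : Tendsto (fun t : ℝ => 1 / t) atTop (nhds 0) := by
    simpa [one_div] using tendsto_inv_atTop_zero (𝕜 := ℝ)
  have h2 : Tendsto (fun t : ℝ => (t - 1) / (2 * t)) atTop (nhds (1/2)) := by
    have : Tendsto (fun t : ℝ => 1/2 - 1/2 * (1 / t)) atTop (nhds (1/2 - 1/2 * 0)) :=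
      (tendsto_const_nhds).sub (hinv.const_mul (1/2))
    rw [mul_zero, sub_zero] at this
    apply this.congr'
    filter_upwards [eventually_gt_atTop (0:ℝ)] with t ht
    field_simp
  have h3 : Tendsto (fun t : ℝ => (t - 1) / (t + 1)) atTop (nhds 1) := by
    have : Tendsto (fun t : ℝ => 1 - 2 * (1 / (t + 1))) atTop (nhds (1 - 2 * 0)) :=
      (tendsto_const_nhds).sub (h1.const_mul 2)
    rw [mul_zero, sub_zero] at this
    apply this.congr'
    filter_upwards [eventually_gt_atTop (0:ℝ)] with t ht
    field_simp
    ring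
  have hlog : Tendsto (fun t : ℝ => Real.log ((t - 1) / (t + 1))) atTop (nhds 0) := by
    have := (Real.continuousAt_log one_ne_zero).tendsto.comp h3
    simpa [Function.comp_def, Real.log_one] using this
  have h := h1.add (h2.mul hlog)
  rw [mul_zero, add_zero] at h
  exact h

lemma Fn_pos {t : ℝ} (ht : 1 < t) : 0 < Fn t := by
  have hstep : Fn (t + 1) < Fn t :=
    Fn_anti (Set.mem_Ioi.mpr ht) (Set.mem_Ioi.mpr (by linarith)) (by linarith)
  have h2 : 0 ≤ Fn (t + 1) := by
    refine le_of_tendsto Fn_tendsto ?_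
    filter_upwards [eventually_gt_atTop (t + 1)] with y hy
    exact (Fn_anti (Set.mem_Ioi.mpr (by linarith)) (Set.mem_Ioi.mpr (by linarith)) hy).le
  linarith

theorem stmt1 :
    (∀ t ∈ Set.Ioi (1 : ℝ),
        0 < 1 / (t + 1) + ((t - 1) / (2 * t)) * Real.log ((t - 1) / (t + 1))) ∧
    StrictAntiOn
      (fun t : ℝ => 1 / (t + 1) + ((t - 1) / (2 * t)) * Real.log ((t - 1) / (t + 1)))
      (Set.Ioi 1) := by
  exact ⟨fun t ht => Fn_pos ht, Fn_anti⟩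
end

section
/- For any y ∈ ℝ³ with |y| > a, the integral over the ball B_a of 1/|y - y'|^4 dy' is at most π/(|y| - a). -/
open MeasureTheory Real Set Filter Topology

lemma aux_div_atTop {C : ℝ} (hC : 0 < C) :
    Tendsto (fun u : ℝ => u / (C + u ^ 2)) atTop (𝓝 0) := by
  have h : Tendsto (fun u : ℝ => C / u + u) atTop atTop := by
    apply tendsto_atTop_mono' _ _ tendsto_id
    filter_upwards [eventually_gt_atTop (0:ℝ)] with u hu
    have : 0 < C / u := by positivity
    simp only [id_eq]; linarith
  have := h.inv_tendsto_atTop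
  apply this.congr'
  filter_upwards [eventually_gt_atTop (0:ℝ)] with u hu
  simp only [Pi.inv_apply]
  rw [eq_div_iff (by positivity), inv_mul_eq_div, div_eq_iff (by positivity)]
  field_simp

lemma aux_div_atBot {C : ℝ} (hC : 0 < C) :
    Tendsto (fun u : ℝ => u / (C + u ^ 2)) atBot (𝓝 0) := by
  have h := ((aux_div_atTop hC).neg).comp tendsto_neg_atBot_atTop
  simp only [Function.comp_def, neg_zero] at h
  apply h.congr
  intro u; ring

lemma hasDerivAt_GA {C : ℝ} (hC : 0 < C) (u : ℝ) :
    HasDerivAt (fun u : ℝ => (2*C)⁻¹ * (u / (C + u ^ 2) + arctan (u / Real.sqrt C) / Real.sqrt C))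
      (((C + u ^ 2) ^ 2)⁻¹) u := by
  have hCu : 0 < C + u ^ 2 := by positivity
  have hs : (0:ℝ) < Real.sqrt C := Real.sqrt_pos.2 hC
  have hss : Real.sqrt C * Real.sqrt C = C := Real.mul_self_sqrt hC.le
  have h1 : HasDerivAt (fun u : ℝ => u / (C + u ^ 2))
      ((C - u ^ 2) / (C + u ^ 2) ^ 2) u := by
    have := (hasDerivAt_id u).div ((hasDerivAt_pow 2 u).const_add C) (ne_of_gt hCu)
    convert! this using 1
    simp only [id]
    field_simp
    ring
  have h2 : HasDerivAt (fun u : ℝ => arctan (u / Real.sqrt C))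
      ((1 + (u / Real.sqrt C) ^ 2)⁻¹ * (Real.sqrt C)⁻¹) u := by
    have := (Real.hasDerivAt_arctan (u / Real.sqrt C)).comp u
      ((hasDerivAt_id u).div_const (Real.sqrt C))
    convert! this using 1
    simp [one_div]
  have h3 := (h1.add (h2.div_const (Real.sqrt C))).const_mul ((2*C)⁻¹)
  convert! h3 using 1
  have h4 : 1 + (u / Real.sqrt C) ^ 2 = (C + u ^ 2) / C := by
    field_simp; rw [Real.sq_sqrt hC.le]; ring
  have h6 : (Real.sqrt C)⁻¹ / Real.sqrt C = C⁻¹ := by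
    rw [div_eq_mul_inv, ← mul_inv, hss]
  rw [h4, mul_div_assoc, h6]
  field_simp
  ring

lemma intA {C : ℝ} (hC : 0 < C) :
    Integrable (fun u : ℝ => ((C + u ^ 2) ^ 2)⁻¹) ∧
      ∫ u : ℝ, ((C + u ^ 2) ^ 2)⁻¹ = π / (2 * C * Real.sqrt C) := by
  have hs : (0:ℝ) < Real.sqrt C := Real.sqrt_pos.2 hC
  set G : ℝ → ℝ := fun u =>
    (2*C)⁻¹ * (u / (C + u ^ 2) + arctan (u / Real.sqrt C) / Real.sqrt C) with hG
  have hderiv : ∀ u : ℝ, HasDerivAt G (((C + u ^ 2) ^ 2)⁻¹) u := hasDerivAt_GA hC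
  have htop : Tendsto G atTop (𝓝 ((2*C)⁻¹ * (0 + (π/2) / Real.sqrt C))) := by
    apply Tendsto.const_mul
    exact (aux_div_atTop hC).add
      ((((Real.tendsto_arctan_atTop.mono_right nhdsWithin_le_nhds).comp
        (tendsto_id.atTop_div_const hs)).div_const _))
  have hbot : Tendsto G atBot (𝓝 ((2*C)⁻¹ * (0 + (-(π/2)) / Real.sqrt C))) := by
    apply Tendsto.const_mul
    exact (aux_div_atBot hC).add
      ((((Real.tendsto_arctan_atBot.mono_right nhdsWithin_le_nhds).comp
        (tendsto_id.atBot_div_const hs)).div_const _))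
  have hint : Integrable (fun u : ℝ => ((C + u ^ 2) ^ 2)⁻¹) := by
    have hIoi : IntegrableOn (fun u : ℝ => ((C + u ^ 2) ^ 2)⁻¹) (Ioi 0) :=
      integrableOn_Ioi_deriv_of_nonneg' (fun x _ => hderiv x)
        (fun x _ => by positivity) htop
    have hIio : IntegrableOn (fun u : ℝ => ((C + u ^ 2) ^ 2)⁻¹) (Iio 0) := by
      have h := (Measure.measurePreserving_neg (volume : Measure ℝ)).integrableOn_comp_preimage
        (Homeomorph.neg ℝ).isClosedEmbedding.measurableEmbedding
        (f := fun u : ℝ => ((C + u ^ 2) ^ 2)⁻¹) (s := Iio 0)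
      rw [← h]
      have hpre : (Neg.neg ⁻¹' Iio 0 : Set ℝ) = Ioi 0 := by ext x; simp
      rw [hpre]
      exact hIoi.congr_fun (fun x _ => by simp [Function.comp_def]) measurableSet_Ioi
    have hIic : IntegrableOn (fun u : ℝ => ((C + u ^ 2) ^ 2)⁻¹) (Iic 0) :=
      hIio.congr_set_ae (Iio_ae_eq_Iic).symm
    rw [← integrableOn_univ, ← Set.Iic_union_Ioi (a := (0:ℝ))]
    exact hIic.union hIoi
  refine ⟨hint, ?_⟩
  have := integral_of_hasDerivAt_of_tendsto hderiv hint hbot htop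
  rw [this]
  have hss : Real.sqrt C * Real.sqrt C = C := Real.mul_self_sqrt hC.le
  field_simp
  ring

lemma aux_ratio_atTop {C : ℝ} (hC : 0 < C) :
    Tendsto (fun v : ℝ => v / Real.sqrt (C + v ^ 2)) atTop (𝓝 1) := by
  have h0 : Tendsto (fun v : ℝ => C / (C + v ^ 2)) atTop (𝓝 0) := by
    apply Tendsto.div_atTop tendsto_const_nhds
    exact tendsto_atTop_add_const_left _ C (tendsto_pow_atTop (by norm_num))
  have h1 : Tendsto (fun v : ℝ => Real.sqrt (1 - C / (C + v ^ 2))) atTop (𝓝 1) := by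
    have := ((tendsto_const_nhds (x := (1:ℝ))).sub h0).sqrt
    simpa using this
  apply h1.congr'
  filter_upwards [eventually_gt_atTop (0:ℝ)] with v hv
  have hCv : 0 < C + v ^ 2 := by positivity
  have : 1 - C / (C + v ^ 2) = v ^ 2 / (C + v ^ 2) := by field_simp; ring
  rw [this, Real.sqrt_div (by positivity), Real.sqrt_sq hv.le]

lemma aux_ratio_atBot {C : ℝ} (hC : 0 < C) :
    Tendsto (fun v : ℝ => v / Real.sqrt (C + v ^ 2)) atBot (𝓝 (-1)) := by
  have h := ((aux_ratio_atTop hC).neg).comp tendsto_neg_atBot_atTop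
  simp only [Function.comp_def] at h
  apply h.congr
  intro v
  rw [neg_sq]
  ring

lemma hasDerivAt_GB {C : ℝ} (hC : 0 < C) (v : ℝ) :
    HasDerivAt (fun v : ℝ => v / (C * Real.sqrt (C + v ^ 2)))
      (((C + v ^ 2) * Real.sqrt (C + v ^ 2))⁻¹) v := by
  have hCv : 0 < C + v ^ 2 := by positivity
  have hsv : 0 < Real.sqrt (C + v ^ 2) := Real.sqrt_pos.2 hCv
  have hss : Real.sqrt (C + v ^ 2) * Real.sqrt (C + v ^ 2) = C + v ^ 2 :=
    Real.mul_self_sqrt hCv.le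
  have h1 : HasDerivAt (fun v : ℝ => Real.sqrt (C + v ^ 2))
      (v / Real.sqrt (C + v ^ 2)) v := by
    have := (Real.hasDerivAt_sqrt (ne_of_gt hCv)).comp v
      ((hasDerivAt_pow 2 v).const_add C)
    convert! this using 1
    field_simp
    ring
  have h2 := (hasDerivAt_id v).div (h1.const_mul C)
    (by positivity : C * Real.sqrt (C + v ^ 2) ≠ 0)
  convert! h2 using 1
  set S := Real.sqrt (C + v ^ 2) with hS
  have hS2 : S ^ 2 = C + v ^ 2 := Real.sq_sqrt hCv.le
  rw [← hS2]
  have hSne : S ≠ 0 := ne_of_gt hsv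
  simp only [id]
  field_simp
  linear_combination (-1 : ℝ) * hS2

lemma intB {C : ℝ} (hC : 0 < C) :
    Integrable (fun v : ℝ => ((C + v ^ 2) * Real.sqrt (C + v ^ 2))⁻¹) ∧
      ∫ v : ℝ, ((C + v ^ 2) * Real.sqrt (C + v ^ 2))⁻¹ = 2 / C := by
  set G : ℝ → ℝ := fun v => v / (C * Real.sqrt (C + v ^ 2)) with hG
  have hderiv : ∀ v : ℝ, HasDerivAt G (((C + v ^ 2) * Real.sqrt (C + v ^ 2))⁻¹) v :=
    hasDerivAt_GB hC
  have hGeq : ∀ v : ℝ, v / Real.sqrt (C + v ^ 2) / C = G v := by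
    intro v; rw [hG]; rw [div_div, mul_comm]
  have htop : Tendsto G atTop (𝓝 (1 / C)) :=
    ((aux_ratio_atTop hC).div_const C).congr hGeq
  have hbot : Tendsto G atBot (𝓝 (-1 / C)) :=
    ((aux_ratio_atBot hC).div_const C).congr hGeq
  have hint : Integrable (fun v : ℝ => ((C + v ^ 2) * Real.sqrt (C + v ^ 2))⁻¹) := by
    have hIoi : IntegrableOn (fun v : ℝ => ((C + v ^ 2) * Real.sqrt (C + v ^ 2))⁻¹) (Ioi 0) :=
      integrableOn_Ioi_deriv_of_nonneg' (fun x _ => hderiv x)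
        (fun x _ => by positivity) htop
    have hIio : IntegrableOn (fun v : ℝ => ((C + v ^ 2) * Real.sqrt (C + v ^ 2))⁻¹) (Iio 0) := by
      have h := (Measure.measurePreserving_neg (volume : Measure ℝ)).integrableOn_comp_preimage
        (Homeomorph.neg ℝ).isClosedEmbedding.measurableEmbedding
        (f := fun v : ℝ => ((C + v ^ 2) * Real.sqrt (C + v ^ 2))⁻¹) (s := Iio 0)
      rw [← h]
      have hpre : (Neg.neg ⁻¹' Iio 0 : Set ℝ) = Ioi 0 := by ext x; simp
      rw [hpre]
      exact hIoi.congr_fun (fun x _ => by simp [Function.comp_def]) measurableSet_Ioi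
    have hIic : IntegrableOn (fun v : ℝ => ((C + v ^ 2) * Real.sqrt (C + v ^ 2))⁻¹) (Iic 0) :=
      hIio.congr_set_ae (Iio_ae_eq_Iic).symm
    rw [← integrableOn_univ, ← Set.Iic_union_Ioi (a := (0:ℝ))]
    exact hIic.union hIoi
  refine ⟨hint, ?_⟩
  rw [integral_of_hasDerivAt_of_tendsto hderiv hint hbot htop]
  ring

lemma intT {R c : ℝ} (h : c < R) :
    IntegrableOn (fun t : ℝ => ((R - t) ^ 2)⁻¹) (Iic c) ∧
      ∫ t in Iic c, ((R - t) ^ 2)⁻¹ = (R - c)⁻¹ := by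
  set g : ℝ → ℝ := fun s => ((R + s) ^ 2)⁻¹ with hg
  have hderiv : ∀ s ∈ Ici (-c), HasDerivAt (fun s : ℝ => -(R + s)⁻¹) (g s) s := by
    intro s hs
    have hRs : R + s ≠ 0 := by
      have : -c ≤ s := hs
      have : 0 < R + s := by linarith
      positivity
    have := (((hasDerivAt_id s).const_add R).inv hRs).neg
    convert! this using 1
    rw [hg]
    simp only [id]
    field_simp
  have htop : Tendsto (fun s : ℝ => -(R + s)⁻¹) atTop (𝓝 0) := by
    have h1 : Tendsto (fun s : ℝ => R + s) atTop atTop :=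
      tendsto_atTop_add_const_left _ R tendsto_id
    have := h1.inv_tendsto_atTop.neg
    simpa using this
  have hIoi : IntegrableOn g (Ioi (-c)) :=
    integrableOn_Ioi_deriv_of_nonneg' hderiv (fun x _ => by positivity) htop
  have hval : ∫ s in Ioi (-c), g s = (R - c)⁻¹ := by
    rw [integral_Ioi_of_hasDerivAt_of_nonneg' hderiv (fun x _ => by positivity) htop]
    simp [sub_eq_add_neg]
  have hIio : IntegrableOn (fun t : ℝ => ((R - t) ^ 2)⁻¹) (Iio c) := by
    have hh := (Measure.measurePreserving_neg (volume : Measure ℝ)).integrableOn_comp_preimage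
      (Homeomorph.neg ℝ).isClosedEmbedding.measurableEmbedding
      (f := g) (s := Ioi (-c))
    have hpre : (Neg.neg ⁻¹' Ioi (-c) : Set ℝ) = Iio c := by ext x; simp
    rw [hpre] at hh
    have := hh.mpr hIoi
    apply this.congr_fun ?_ measurableSet_Iio
    intro x _
    simp [hg, Function.comp_def, sub_eq_add_neg]
  have hIic : IntegrableOn (fun t : ℝ => ((R - t) ^ 2)⁻¹) (Iic c) :=
    hIio.congr_set_ae (Iio_ae_eq_Iic).symm
  refine ⟨hIic, ?_⟩
  have := integral_comp_neg_Iic c g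
  rw [hval] at this
  rw [← this]
  apply setIntegral_congr_fun measurableSet_Iic
  intro x _
  simp [hg, sub_eq_add_neg]

lemma int2D {B : ℝ} (hB : 0 < B) :
    Integrable (fun p : ℝ × ℝ => ((B ^ 2 + p.1 ^ 2 + p.2 ^ 2) ^ 2)⁻¹) ∧
      ∫ p : ℝ × ℝ, ((B ^ 2 + p.1 ^ 2 + p.2 ^ 2) ^ 2)⁻¹ = π / B ^ 2 := by
  have hC : ∀ u : ℝ, 0 < B ^ 2 + u ^ 2 := fun u => by positivity
  have hc : Continuous (fun p : ℝ × ℝ => ((B ^ 2 + p.1 ^ 2 + p.2 ^ 2) ^ 2)⁻¹) := by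
    apply Continuous.inv₀
    · fun_prop
    · intro p; positivity
  have hslice : ∀ u : ℝ, (∫ v : ℝ, ((B ^ 2 + u ^ 2 + v ^ 2) ^ 2)⁻¹) =
      π / (2 * (B ^ 2 + u ^ 2) * Real.sqrt (B ^ 2 + u ^ 2)) := fun u => (intA (hC u)).2
  have heq : ∀ u : ℝ, π / (2 * (B ^ 2 + u ^ 2) * Real.sqrt (B ^ 2 + u ^ 2)) =
      (π / 2) * (((B ^ 2 + u ^ 2) * Real.sqrt (B ^ 2 + u ^ 2))⁻¹) := by
    intro u
    have hs : Real.sqrt (B ^ 2 + u ^ 2) ≠ 0 := ne_of_gt (Real.sqrt_pos.2 (hC u))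
    have h2 : (B ^ 2 + u ^ 2) ≠ 0 := ne_of_gt (hC u)
    field_simp
  have houtInt : Integrable
      (fun u : ℝ => π / (2 * (B ^ 2 + u ^ 2) * Real.sqrt (B ^ 2 + u ^ 2))) := by
    have h := (intB (show (0:ℝ) < B ^ 2 by positivity)).1.const_mul (π / 2)
    exact h.congr (Filter.Eventually.of_forall (fun u => (heq u).symm))
  have hprod : Integrable (fun p : ℝ × ℝ => ((B ^ 2 + p.1 ^ 2 + p.2 ^ 2) ^ 2)⁻¹)
      ((volume : Measure ℝ).prod (volume : Measure ℝ)) := by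
    apply (integrable_prod_iff (hc.aestronglyMeasurable.mono_measure le_rfl)).2
    constructor
    · exact Filter.Eventually.of_forall (fun u => (intA (hC u)).1)
    · have hfun : ∀ u : ℝ, (∫ v : ℝ, ‖((B ^ 2 + u ^ 2 + v ^ 2) ^ 2)⁻¹‖) =
          π / (2 * (B ^ 2 + u ^ 2) * Real.sqrt (B ^ 2 + u ^ 2)) := by
        intro u
        rw [← hslice u]
        congr 1
        funext v
        rw [Real.norm_eq_abs, abs_of_nonneg (by positivity)]
      exact houtInt.congr (Filter.Eventually.of_forall (fun u => (hfun u).symm))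
  constructor
  · rw [← Measure.volume_eq_prod] at hprod
    exact hprod
  · rw [Measure.volume_eq_prod, integral_prod _ hprod]
    calc (∫ u : ℝ, ∫ v : ℝ, ((B ^ 2 + u ^ 2 + v ^ 2) ^ 2)⁻¹)
        = ∫ u : ℝ, (π / 2) * (((B ^ 2 + u ^ 2) * Real.sqrt (B ^ 2 + u ^ 2))⁻¹) := by
          congr 1; funext u; rw [hslice u, heq u]
      _ = (π / 2) * ∫ u : ℝ, (((B ^ 2 + u ^ 2) * Real.sqrt (B ^ 2 + u ^ 2))⁻¹) :=
          integral_const_mul _ _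
      _ = π / B ^ 2 := by
          rw [(intB (show (0:ℝ) < B ^ 2 by positivity)).2]
          field_simp

lemma int3D {R c : ℝ} (hc : c < R) :
    IntegrableOn (fun p : ℝ × ℝ × ℝ => (((R - p.1) ^ 2 + p.2.1 ^ 2 + p.2.2 ^ 2) ^ 2)⁻¹)
        ((Iic c) ×ˢ (univ : Set (ℝ × ℝ))) ∧
      ∫ p in (Iic c) ×ˢ (univ : Set (ℝ × ℝ)),
          (((R - p.1) ^ 2 + p.2.1 ^ 2 + p.2.2 ^ 2) ^ 2)⁻¹ = π / (R - c) := by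
  set F : ℝ × ℝ × ℝ → ℝ :=
    fun p => (((R - p.1) ^ 2 + p.2.1 ^ 2 + p.2.2 ^ 2) ^ 2)⁻¹ with hF
  have hmF : Measurable F := by
    apply Measurable.inv
    fun_prop
  have hrestrict : ((volume : Measure ℝ).restrict (Iic c)).prod (volume : Measure (ℝ × ℝ)) =
      (volume : Measure (ℝ × ℝ × ℝ)).restrict ((Iic c) ×ˢ (univ : Set (ℝ × ℝ))) := by
    rw [show (volume : Measure (ℝ × ℝ)) = (volume : Measure (ℝ × ℝ)).restrict univ from
      (Measure.restrict_univ).symm, Measure.prod_restrict, ← Measure.volume_eq_prod]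
  have hslice2 : ∀ t ∈ Iic c, Integrable (fun p : ℝ × ℝ => F (t, p)) ∧
      (∫ p : ℝ × ℝ, ‖F (t, p)‖) = π * ((R - t) ^ 2)⁻¹ := by
    intro t ht
    have hB : 0 < R - t := by simp only [mem_Iic] at ht; linarith
    have h2 := int2D hB
    have hnorm : (fun p : ℝ × ℝ => ‖F (t, p)‖) = fun p : ℝ × ℝ => F (t, p) := by
      funext p
      rw [Real.norm_eq_abs, abs_of_nonneg (by rw [hF]; positivity)]
    refine ⟨h2.1, ?_⟩
    rw [hnorm]
    rw [show (∫ p : ℝ × ℝ, F (t, p)) = π / (R - t) ^ 2 from h2.2]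
    rw [div_eq_mul_inv]
  have hInt : Integrable F (((volume : Measure ℝ).restrict (Iic c)).prod volume) := by
    apply (integrable_prod_iff (hmF.aestronglyMeasurable)).2
    constructor
    · filter_upwards [ae_restrict_mem measurableSet_Iic] with t ht
      exact (hslice2 t ht).1
    · have hout : IntegrableOn (fun t : ℝ => π * ((R - t) ^ 2)⁻¹) (Iic c) :=
        (intT hc).1.const_mul π
      apply hout.congr
      filter_upwards [ae_restrict_mem measurableSet_Iic] with t ht
      exact ((hslice2 t ht).2).symm
  constructor
  · rw [IntegrableOn, ← hrestrict]
    exact hInt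
  · have hslice3 : ∀ t ∈ Iic c, (∫ p : ℝ × ℝ, F (t, p)) = π * ((R - t) ^ 2)⁻¹ := by
      intro t ht
      have hB : 0 < R - t := by simp only [mem_Iic] at ht; linarith
      rw [show (∫ p : ℝ × ℝ, F (t, p)) = π / (R - t) ^ 2 from (int2D hB).2]
      rw [div_eq_mul_inv]
    have hstep : (∫ p in (Iic c) ×ˢ (univ : Set (ℝ × ℝ)), F p) =
        ∫ t in Iic c, ∫ p : ℝ × ℝ, F (t, p) := by
      rw [show (volume : Measure (ℝ × ℝ × ℝ)).restrict ((Iic c) ×ˢ (univ : Set (ℝ × ℝ))) =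
        ((volume : Measure ℝ).restrict (Iic c)).prod volume from hrestrict.symm]
      exact integral_prod _ hInt
    rw [hstep, setIntegral_congr_fun measurableSet_Iic hslice3, integral_const_mul,
      (intT hc).2, div_eq_mul_inv]

theorem stmt2 (a : ℝ) (ha : 0 < a) (y : EuclideanSpace ℝ (Fin 3)) (hy : a < ‖y‖) :
    ∫ y' in Metric.ball (0 : EuclideanSpace ℝ (Fin 3)) a, 1 / ‖y - y'‖ ^ 4 ≤
      π / (‖y‖ - a) := by
  set R := ‖y‖ with hR
  have hR0 : 0 < R := lt_trans ha hy
  set e : EuclideanSpace ℝ (Fin 3) := R⁻¹ • y with he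
  have henorm : ‖e‖ = 1 := by
    rw [he, norm_smul, norm_inv, Real.norm_eq_abs, abs_of_pos hR0, ← hR,
      inv_mul_cancel₀ (ne_of_gt hR0)]
  have hortho : Orthonormal ℝ (({0} : Set (Fin 3)).restrict (fun _ : Fin 3 => e)) := by
    constructor
    · intro i; exact henorm
    · intro i j hij
      exact absurd (Subsingleton.elim i j) hij
  obtain ⟨b, hb⟩ := hortho.exists_orthonormalBasis_extension_of_card_eq
    (by simp [finrank_euclideanSpace])
  have hb0 : b 0 = e := hb 0 rfl
  set T := b.repr with hT
  have hmpT : MeasurePreserving T volume volume := b.measurePreserving_repr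
  have hembT : MeasurableEmbedding T := T.toHomeomorph.measurableEmbedding
  have hTy : T y = R • EuclideanSpace.single (0 : Fin 3) (1:ℝ) := by
    have hye : y = R • e := by rw [he, smul_inv_smul₀ (ne_of_gt hR0)]
    rw [hye, T.map_smul, ← hb0, hT, b.repr_self]
  have hnorm4 : ∀ x : EuclideanSpace ℝ (Fin 3),
      ‖T y - x‖ ^ 4 = ((R - x 0) ^ 2 + (x 1) ^ 2 + (x 2) ^ 2) ^ 2 := by
    intro x
    have h2 : ‖T y - x‖ ^ 2 = (R - x 0) ^ 2 + (x 1) ^ 2 + (x 2) ^ 2 := by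
      rw [EuclideanSpace.norm_eq, Real.sq_sqrt (by positivity)]
      rw [Fin.sum_univ_three]
      have h0 : (T y - x) 0 = R - x 0 := by
        simp [hTy, EuclideanSpace.single_apply]
      have h1 : (T y - x) 1 = - x 1 := by
        simp [hTy, EuclideanSpace.single_apply]
      have h2' : (T y - x) 2 = - x 2 := by
        simp [hTy, EuclideanSpace.single_apply]
      rw [h0, h1, h2']
      simp [Real.norm_eq_abs, sq_abs]
    calc ‖T y - x‖ ^ 4 = (‖T y - x‖ ^ 2) ^ 2 := by ring
      _ = _ := by rw [h2]
  have hstep1 : (∫ y' in Metric.ball (0 : EuclideanSpace ℝ (Fin 3)) a, 1 / ‖y - y'‖ ^ 4)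
      = ∫ x in Metric.ball (0 : EuclideanSpace ℝ (Fin 3)) a, (‖T y - x‖ ^ 4)⁻¹ := by
    have hpre : T ⁻¹' (Metric.ball 0 a) = Metric.ball 0 a := by
      ext y'
      simp only [Set.mem_preimage, mem_ball_zero_iff, LinearIsometryEquiv.norm_map]
    have h := hmpT.setIntegral_preimage_emb hembT
      (fun x => (‖T y - x‖ ^ 4)⁻¹) (Metric.ball 0 a)
    rw [hpre] at h
    rw [← h]
    apply setIntegral_congr_fun measurableSet_ball
    intro y' _
    show 1 / ‖y - y'‖ ^ 4 = (‖T y - T y'‖ ^ 4)⁻¹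
    rw [one_div, ← map_sub, T.norm_map]
  -- the measurable equivalence to ℝ × ℝ × ℝ
  set ψ : EuclideanSpace ℝ (Fin 3) ≃ᵐ ℝ × ℝ × ℝ :=
    ((MeasurableEquiv.toLp 2 (Fin 3 → ℝ)).symm).trans
      ((MeasurableEquiv.piFinSuccAbove (fun _ : Fin 3 => ℝ) 0).trans
        ((MeasurableEquiv.refl ℝ).prodCongr
          ((MeasurableEquiv.piFinSuccAbove (fun _ : Fin 2 => ℝ) 0).trans
            ((MeasurableEquiv.refl ℝ).prodCongr (MeasurableEquiv.funUnique (Fin 1) ℝ))))) with hψdef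
  have hψmp : MeasurePreserving ψ volume volume := by
    have h1 := EuclideanSpace.volume_preserving_symm_measurableEquiv_toLp (Fin 3)
    have h2 := volume_preserving_piFinSuccAbove (fun _ : Fin 3 => ℝ) 0
    have h3 := volume_preserving_piFinSuccAbove (fun _ : Fin 2 => ℝ) 0
    have h4 := volume_preserving_funUnique (Fin 1) ℝ
    exact (((MeasurePreserving.id _).prod
      (((MeasurePreserving.id _).prod h4).comp h3)).comp h2).comp h1
  have hψx : ∀ x : EuclideanSpace ℝ (Fin 3), ψ x = (x 0, x 1, x 2) := by
    intro x
    rfl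
  set S : Set (EuclideanSpace ℝ (Fin 3)) := ψ ⁻¹' ((Iic a) ×ˢ (univ : Set (ℝ × ℝ))) with hSdef
  have hSmeas : MeasurableSet S :=
    ψ.measurable (measurableSet_Iic.prod MeasurableSet.univ)
  have hSmem : ∀ x : EuclideanSpace ℝ (Fin 3), x ∈ S ↔ x 0 ≤ a := by
    intro x
    simp [hSdef, hψx x]
  have h3d := int3D (show a < R from hy)
  have key := hψmp.setIntegral_preimage_emb ψ.measurableEmbedding
    (fun p : ℝ × ℝ × ℝ => (((R - p.1) ^ 2 + p.2.1 ^ 2 + p.2.2 ^ 2) ^ 2)⁻¹)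
    ((Iic a) ×ˢ (univ : Set (ℝ × ℝ)))
  have hFψ : ∀ x : EuclideanSpace ℝ (Fin 3),
      (((R - (ψ x).1) ^ 2 + (ψ x).2.1 ^ 2 + (ψ x).2.2 ^ 2) ^ 2)⁻¹ = (‖T y - x‖ ^ 4)⁻¹ := by
    intro x
    rw [hψx x, hnorm4 x]
  have hIntS : IntegrableOn (fun x => (‖T y - x‖ ^ 4)⁻¹) S := by
    have h := (hψmp.integrableOn_comp_preimage ψ.measurableEmbedding).mpr h3d.1
    apply h.congr_fun ?_ hSmeas
    intro x _
    simp only [Function.comp_apply]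
    exact hFψ x
  have hvalS : (∫ x in S, (‖T y - x‖ ^ 4)⁻¹) = π / (R - a) := by
    rw [← h3d.2, ← key]
    apply setIntegral_congr_fun hSmeas
    intro x _
    exact (hFψ x).symm
  have hsub : Metric.ball (0 : EuclideanSpace ℝ (Fin 3)) a ⊆ S := by
    intro x hx
    rw [hSmem]
    have hx0 : |x 0| ≤ ‖x‖ := by
      rw [EuclideanSpace.norm_eq]
      rw [show |x 0| = Real.sqrt ((x 0) ^ 2) from (Real.sqrt_sq_eq_abs _).symm]
      apply Real.sqrt_le_sqrt
      rw [Fin.sum_univ_three]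
      have : ‖x 0‖ ^ 2 = (x 0) ^ 2 := by rw [Real.norm_eq_abs, sq_abs]
      rw [this]
      nlinarith [sq_nonneg ‖x 1‖, sq_nonneg ‖x 2‖]
    have := mem_ball_zero_iff.1 hx
    calc x 0 ≤ |x 0| := le_abs_self _
      _ ≤ ‖x‖ := hx0
      _ ≤ a := le_of_lt this
  rw [hstep1, ← hvalS]
  apply setIntegral_mono_set hIntS
  · apply Filter.Eventually.of_forall
    intro x
    have hh : (0:ℝ) ≤ (‖T y - x‖ ^ 4)⁻¹ := inv_nonneg.2 (by positivity)
    exact hh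
  · exact Filter.Eventually.of_forall hsub
end

section
/- For a > 0, the supremum over r > a of the integral over the exterior region {y' ∈ ℝ³ : |y'| > a} of 1/(r² + |y'|²)² dy' is attained at r = a and equals π(π+2)/(2a). -/
open MeasureTheory Real Set Filter Topology

lemma hasDeriv_F (r : ℝ) (hr : 0 < r) (x : ℝ) :
    HasDerivAt (fun ρ : ℝ => (arctan (ρ / r) / r - ρ / (r ^ 2 + ρ ^ 2)) / 2)
      (x ^ 2 / (r ^ 2 + x ^ 2) ^ 2) x := by
  have hd : (0:ℝ) < r ^ 2 + x ^ 2 := by positivity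
  have h1 : HasDerivAt (fun ρ : ℝ => arctan (ρ / r) / r)
      ((1 / (1 + (x / r) ^ 2)) * (1 / r) / r) x := by
    exact (((hasDerivAt_arctan (x / r)).comp x
      ((hasDerivAt_id x).div_const r)).div_const r).congr_deriv
      (by ring : 1 / (1 + (x / r) ^ 2) * (1 / r) / r = 1 / (1 + (x / r) ^ 2) * (1 / r) / r)
  have h2 : HasDerivAt (fun ρ : ℝ => ρ / (r ^ 2 + ρ ^ 2))
      ((1 * (r ^ 2 + x ^ 2) - x * (2 * x)) / (r ^ 2 + x ^ 2) ^ 2) x := by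
    have hden : HasDerivAt (fun ρ : ℝ => r ^ 2 + ρ ^ 2) (2 * x) x := by
      simpa using ((hasDerivAt_pow 2 x).const_add (r ^ 2))
    exact (hasDerivAt_id x).div hden hd.ne'
  have := (h1.sub h2).div_const 2
  refine HasDerivAt.congr_deriv this ?_
  have h1r : (1 : ℝ) + (x / r) ^ 2 = (r ^ 2 + x ^ 2) / r ^ 2 := by
    field_simp
  rw [h1r]
  field_simp
  ring

lemma tendsto_F (a r : ℝ) (hr : 0 < r) :
    Tendsto (fun ρ : ℝ => (arctan (ρ / r) / r - ρ / (r ^ 2 + ρ ^ 2)) / 2) atTop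
      (𝓝 (π / (4 * r))) := by
  have h1 : Tendsto (fun ρ : ℝ => arctan (ρ / r) / r) atTop (𝓝 (π / 2 / r)) := by
    refine Tendsto.div_const ?_ r
    have : Tendsto (fun ρ : ℝ => ρ / r) atTop atTop := tendsto_id.atTop_div_const hr
    exact (tendsto_arctan_atTop.mono_right nhdsWithin_le_nhds).comp this
  have h2 : Tendsto (fun ρ : ℝ => ρ / (r ^ 2 + ρ ^ 2)) atTop (𝓝 0) := by
    apply squeeze_zero' (g := fun ρ : ℝ => 1 / ρ)
    · filter_upwards [eventually_gt_atTop 0] with ρ hρ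
      positivity
    · filter_upwards [eventually_gt_atTop 0] with ρ hρ
      rw [div_le_div_iff₀ (by positivity) hρ]
      nlinarith [sq_nonneg r]
    · simpa [one_div] using tendsto_inv_atTop_zero
  have := (h1.sub h2).div_const 2
  convert this using 2
  ring

lemma radial_integrable (a r : ℝ) (hr : 0 < r) :
    IntegrableOn (fun ρ : ℝ => ρ ^ 2 / (r ^ 2 + ρ ^ 2) ^ 2) (Ioi a) := by
  refine integrableOn_Ioi_deriv_of_nonneg ?_ (fun x _ => hasDeriv_F r hr x)
    (fun x _ => by positivity) (tendsto_F a r hr)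
  exact (hasDeriv_F r hr a).continuousAt.continuousWithinAt

lemma radial_integral (a r : ℝ) (hr : 0 < r) :
    ∫ ρ in Ioi a, ρ ^ 2 / (r ^ 2 + ρ ^ 2) ^ 2 =
      π / (4 * r) - (arctan (a / r) / r - a / (r ^ 2 + a ^ 2)) / 2 := by
  exact integral_Ioi_of_hasDerivAt_of_tendsto' (fun x _ => hasDeriv_F r hr x)
    (radial_integrable a r hr) (tendsto_F a r hr)

lemma vol_ball3 : (volume (Metric.ball (0 : EuclideanSpace ℝ (Fin 3)) 1)).toReal = 4 * π / 3 := by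
  have h32 : Real.Gamma (3 / 2) = Real.sqrt π / 2 := by
    rw [show (3 : ℝ) / 2 = 1 / 2 + 1 by norm_num, Real.Gamma_add_one (by norm_num),
      Real.Gamma_one_half_eq]
    ring
  have h52 : Real.Gamma ((3 : ℝ) / 2 + 1) = 3 / 4 * Real.sqrt π := by
    rw [Real.Gamma_add_one (by norm_num), h32]; ring
  rw [EuclideanSpace.volume_ball]
  have hsq : Real.sqrt π ^ 3 = π * Real.sqrt π := by
    rw [pow_succ, sq_sqrt pi_nonneg]
  have hs0 : Real.sqrt π ≠ 0 := by positivity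
  simp only [Fintype.card_fin]
  rw [ENNReal.toReal_mul, ENNReal.toReal_pow, ENNReal.toReal_ofReal zero_le_one,
    ENNReal.toReal_ofReal (by positivity)]
  push_cast
  rw [h52, hsq]
  field_simp

lemma full_integral (a : ℝ) (ha : 0 < a) (r : ℝ) (hr : 0 < r) :
    ∫ y' in {y' : EuclideanSpace ℝ (Fin 3) | a < ‖y'‖}, 1 / (r ^ 2 + ‖y'‖ ^ 2) ^ 2 =
      4 * π * ∫ ρ in Ioi a, ρ ^ 2 / (r ^ 2 + ρ ^ 2) ^ 2 := by
  set E := EuclideanSpace ℝ (Fin 3)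
  have hS : MeasurableSet {y' : E | a < ‖y'‖} :=
    measurableSet_lt measurable_const measurable_norm
  set f : ℝ → ℝ := Set.indicator (Ioi a) (fun ρ => 1 / (r ^ 2 + ρ ^ 2) ^ 2) with hf
  have key : ∫ y' in {y' : E | a < ‖y'‖}, 1 / (r ^ 2 + ‖y'‖ ^ 2) ^ 2 = ∫ x : E, f ‖x‖ := by
    rw [← integral_indicator hS]
    refine integral_congr_ae (Filter.Eventually.of_forall fun x => ?_)
    by_cases h : a < ‖x‖ <;> simp [hf, Set.indicator, h]
  rw [key, integral_fun_norm_addHaar volume f]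
  have hdim : Module.finrank ℝ E = 3 := finrank_euclideanSpace_fin
  rw [hdim, measureReal_def, vol_ball3]
  have inner_eq : ∫ y in Ioi (0 : ℝ), y ^ (3 - 1) • f y =
      ∫ ρ in Ioi a, ρ ^ 2 / (r ^ 2 + ρ ^ 2) ^ 2 := by
    have e1 : ∀ y : ℝ, y ^ (3 - 1) • f y =
        Set.indicator (Ioi a) (fun ρ => ρ ^ 2 / (r ^ 2 + ρ ^ 2) ^ 2) y := by
      intro y
      by_cases h : y ∈ Ioi a <;> simp [hf, Set.indicator, h, smul_eq_mul] <;> try ring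
    simp only [e1]
    rw [integral_indicator measurableSet_Ioi, Measure.restrict_restrict measurableSet_Ioi,
      Set.Ioi_inter_Ioi, max_eq_left ha.le]
  rw [inner_eq, nsmul_eq_mul, smul_eq_mul]
  ring

theorem stmt3 (a : ℝ) (ha : 0 < a) :
    IsLUB
      ((fun r : ℝ =>
          ∫ y' in {y' : EuclideanSpace ℝ (Fin 3) | a < ‖y'‖}, 1 / (r ^ 2 + ‖y'‖ ^ 2) ^ 2) ''
        Set.Ioi a)
      (∫ y' in {y' : EuclideanSpace ℝ (Fin 3) | a < ‖y'‖}, 1 / (a ^ 2 + ‖y'‖ ^ 2) ^ 2) ∧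
    (∫ y' in {y' : EuclideanSpace ℝ (Fin 3) | a < ‖y'‖}, 1 / (a ^ 2 + ‖y'‖ ^ 2) ^ 2) =
      π * (π + 2) / (2 * a) := by
  set I : ℝ → ℝ := fun r =>
    ∫ y' in {y' : EuclideanSpace ℝ (Fin 3) | a < ‖y'‖}, 1 / (r ^ 2 + ‖y'‖ ^ 2) ^ 2 with hI
  set φ : ℝ → ℝ := fun r =>
    4 * π * (π / (4 * r) - (arctan (a / r) / r - a / (r ^ 2 + a ^ 2)) / 2) with hφ
  have hIφ : ∀ r : ℝ, 0 < r → I r = φ r := by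
    intro r hr
    rw [hI, hφ]
    simp only
    rw [full_integral a ha r hr, radial_integral a r hr]
  have hφa : φ a = π * (π + 2) / (2 * a) := by
    rw [hφ]
    simp only [div_self ha.ne', arctan_one]
    field_simp
    ring
  have hval : I a = π * (π + 2) / (2 * a) := by rw [hIφ a ha, hφa]
  refine ⟨⟨?_, ?_⟩, hval⟩
  · rintro x ⟨r, hr, rfl⟩
    have hr0 : 0 < r := ha.trans hr
    show I r ≤ I a
    rw [hI]
    simp only
    rw [full_integral a ha r hr0, full_integral a ha a ha]
    have hJ : (∫ ρ in Ioi a, ρ ^ 2 / (r ^ 2 + ρ ^ 2) ^ 2) ≤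
        ∫ ρ in Ioi a, ρ ^ 2 / (a ^ 2 + ρ ^ 2) ^ 2 := by
      refine setIntegral_mono_on (radial_integrable a r hr0) (radial_integrable a a ha)
        measurableSet_Ioi fun x _ => ?_
      have har : a ≤ r := (mem_Ioi.mp hr).le
      gcongr
      all_goals first | positivity | nlinarith [ha.le]
    exact mul_le_mul_of_nonneg_left hJ (by positivity)
  · intro b hb
    have h2 : ContinuousAt (fun r : ℝ => arctan (a / r) / r) a := by
      exact ((Real.continuous_arctan.continuousAt.comp
        (continuousAt_const.div continuousAt_id ha.ne')).div continuousAt_id ha.ne')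
    have h1 : ContinuousAt (fun r : ℝ => π / (4 * r)) a :=
      continuousAt_const.div (by fun_prop) (by positivity)
    have h3 : ContinuousAt (fun r : ℝ => a / (r ^ 2 + a ^ 2)) a :=
      continuousAt_const.div (by fun_prop) (by positivity)
    have hc : ContinuousAt φ a := by
      rw [hφ]
      exact continuousAt_const.mul (h1.sub ((h2.sub h3).div_const 2))
    have htd : Tendsto φ (𝓝[>] a) (𝓝 (φ a)) := hc.continuousWithinAt.tendsto
    show I a ≤ b
    rw [hIφ a ha]
    refine le_of_tendsto htd ?_
    filter_upwards [self_mem_nhdsWithin] with r hr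
    rw [← hIφ r (ha.trans hr)]
    exact hb ⟨r, hr, rfl⟩
end

section
/- The L¹(ℝ³) norm of the function H^λ(y) = |y|^{-4}·[1 - (1/2) t² K₂(t)] with t = √λ·|y| equals π²√λ, for every λ > 0. -/
open MeasureTheory Real Filter Set

lemma aux_int2 {K1 : ℝ → ℝ} (hK1 : IntegrableOn (fun t : ℝ => t * K1 t) (Set.Ioi 0))
    {t : ℝ} (_ht : 0 < t) : IntegrableOn (fun s : ℝ => s ^ 2 * K1 s) (Set.Ioc 0 t) := by
  have hsub : Set.Ioc (0:ℝ) t ⊆ Set.Ioi 0 := Set.Ioc_subset_Ioi_self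
  have hg : IntegrableOn (fun s : ℝ => t * |s * K1 s|) (Set.Ioc 0 t) :=
    ((hK1.mono_set hsub).norm).const_mul t
  refine Integrable.mono' hg ?_ ?_
  · have : AEStronglyMeasurable (fun s : ℝ => s * K1 s) (volume.restrict (Set.Ioc 0 t)) :=
      hK1.1.mono_measure (Measure.restrict_mono hsub le_rfl)
    have := (aestronglyMeasurable_id.mul this)
    refine this.congr ?_
    filter_upwards with s
    simp [Pi.mul_apply]
    ring
  · filter_upwards [ae_restrict_mem measurableSet_Ioc] with s hs
    have h1 : ‖s ^ 2 * K1 s‖ = |s| * |s * K1 s| := by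
      rw [norm_eq_abs, ← abs_mul]; ring_nf
    rw [h1, abs_of_pos hs.1]
    exact mul_le_mul_of_nonneg_right hs.2 (abs_nonneg _)

lemma aux1 {K1 K2 : ℝ → ℝ}
    (hderiv : ∀ t : ℝ, 0 < t →
      HasDerivAt (fun s : ℝ => s ^ 2 * K2 s) (-(t ^ 2 * K1 t)) t)
    (hlim0 : Tendsto (fun t : ℝ => t ^ 2 * K2 t) (nhdsWithin 0 (Set.Ioi 0)) (nhds 2))
    (hK1 : IntegrableOn (fun t : ℝ => t * K1 t) (Set.Ioi 0))
    {t : ℝ} (ht : 0 < t) :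
    t ^ 2 * K2 t = 2 - ∫ s in Set.Ioc 0 t, s ^ 2 * K1 s := by
  set I : ℝ := ∫ s in Set.Ioc 0 t, s ^ 2 * K1 s with hI
  have hint2 := aux_int2 hK1 ht
  -- the key identity for ε ∈ Ioo 0 t
  have key : ∀ ε ∈ Set.Ioo (0:ℝ) t,
      t ^ 2 * K2 t = ε ^ 2 * K2 ε + (∫ s in Set.Ioc 0 ε, s ^ 2 * K1 s) - I := by
    intro ε hε
    have hεt : ε ≤ t := hε.2.le
    have hFTC : ∫ s in ε..t, -(s ^ 2 * K1 s) = t ^ 2 * K2 t - ε ^ 2 * K2 ε := by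
      apply intervalIntegral.integral_eq_sub_of_hasDerivAt
      · intro x hx
        rw [Set.uIcc_of_le hεt] at hx
        exact hderiv x (hε.1.trans_le hx.1)
      · rw [intervalIntegrable_iff_integrableOn_Ioc_of_le hεt]
        exact (hint2.mono_set (Set.Ioc_subset_Ioc_left hε.1.le)).neg
    have hsplit : (∫ s in Set.Ioc 0 ε, s ^ 2 * K1 s) + (∫ s in Set.Ioc ε t, s ^ 2 * K1 s) = I := by
      rw [← MeasureTheory.setIntegral_union (Set.Ioc_disjoint_Ioc_of_le le_rfl) measurableSet_Ioc
        (hint2.mono_set (Set.Ioc_subset_Ioc_right hεt)) (hint2.mono_set (Set.Ioc_subset_Ioc_left hε.1.le)),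
        Set.Ioc_union_Ioc_eq_Ioc hε.1.le hεt]
    rw [intervalIntegral.integral_neg, intervalIntegral.integral_of_le hεt] at hFTC
    linarith
  -- take the limit ε → 0+
  have hne : (nhdsWithin (0:ℝ) (Set.Ioo 0 t)).NeBot := by
    rw [← mem_closure_iff_nhdsWithin_neBot, closure_Ioo ht.ne]
    exact ⟨le_rfl, ht.le⟩
  have hmono : nhdsWithin (0:ℝ) (Set.Ioo 0 t) ≤ nhdsWithin 0 (Set.Ioi 0) :=
    nhdsWithin_mono _ Set.Ioo_subset_Ioi_self
  have h2 : Tendsto (fun ε : ℝ => ε ^ 2 * K2 ε) (nhdsWithin 0 (Set.Ioo 0 t)) (nhds 2) :=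
    hlim0.mono_left hmono
  have h0 : Tendsto (fun ε : ℝ => ∫ s in Set.Ioc 0 ε, s ^ 2 * K1 s)
      (nhdsWithin 0 (Set.Ioo 0 t)) (nhds 0) := by
    have hcont := intervalIntegral.continuousOn_primitive (f := fun s : ℝ => s ^ 2 * K1 s)
      (a := 0) (b := t) (μ := volume) (by rwa [integrableOn_Icc_iff_integrableOn_Ioc])
    have hc0 := hcont 0 (Set.left_mem_Icc.2 ht.le)
    have : (∫ s in Set.Ioc (0:ℝ) 0, s ^ 2 * K1 s) = 0 := by simp
    rw [ContinuousWithinAt] at hc0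
    rw [this] at hc0
    exact hc0.mono_left (nhdsWithin_mono _ Set.Ioo_subset_Icc_self)
  have hT : Tendsto (fun ε : ℝ => ε ^ 2 * K2 ε + (∫ s in Set.Ioc 0 ε, s ^ 2 * K1 s) - I)
      (nhdsWithin 0 (Set.Ioo 0 t)) (nhds (2 + 0 - I)) := (h2.add h0).sub tendsto_const_nhds
  have hconst : Tendsto (fun _ : ℝ => t ^ 2 * K2 t) (nhdsWithin 0 (Set.Ioo 0 t))
      (nhds (t ^ 2 * K2 t)) := tendsto_const_nhds
  have := tendsto_nhds_unique (hconst.congr' ?_) hT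
  · linarith
  · filter_upwards [self_mem_nhdsWithin] with ε hε
    exact key ε hε


lemma aux_Ici (c s : ℝ) (hs : 0 < s) :
    ∫ t in Set.Ioi (0:ℝ), Set.indicator (Set.Ici s) (fun t => c / (2 * t ^ 2)) t
      = c / 2 * s⁻¹ := by
  rw [MeasureTheory.integral_indicator measurableSet_Ici,
    Measure.restrict_restrict measurableSet_Ici,
    show Set.Ici s ∩ Set.Ioi 0 = Set.Ici s by
      ext x
      simp only [Set.mem_inter_iff, Set.mem_Ici, Set.mem_Ioi, and_iff_left_iff_imp]
      exact fun hx => hs.trans_le hx,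
    MeasureTheory.integral_Ici_eq_integral_Ioi]
  have hcong : ∀ t ∈ Set.Ioi s, c / (2 * t ^ 2) = (c / 2) * t ^ (-2 : ℝ) := by
    intro t ht
    have ht0 : (0:ℝ) < t := hs.trans ht
    rw [Real.rpow_neg ht0.le, show ((2:ℝ) : ℝ) = ((2:ℕ):ℝ) by norm_num,
      Real.rpow_natCast]
    field_simp
  rw [MeasureTheory.setIntegral_congr_fun measurableSet_Ioi hcong,
    MeasureTheory.integral_const_mul, integral_Ioi_rpow_of_lt (by norm_num) hs]
  rw [show (-2:ℝ) + 1 = -1 by norm_num, Real.rpow_neg_one]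
  field_simp

lemma aux_IciInt (c s : ℝ) (hs : 0 < s) :
    IntegrableOn (fun t : ℝ => c / (2 * t ^ 2)) (Set.Ici s) := by
  rw [integrableOn_Ici_iff_integrableOn_Ioi]
  have hbase := (integrableOn_Ioi_rpow_of_lt (by norm_num : (-2:ℝ) < -1) hs).const_mul (c / 2)
  refine MeasureTheory.IntegrableOn.congr_fun hbase (fun t ht => ?_) measurableSet_Ioi
  have ht0 : (0:ℝ) < t := hs.trans ht
  rw [Real.rpow_neg ht0.le, show ((2:ℝ) : ℝ) = ((2:ℕ):ℝ) by norm_num, Real.rpow_natCast]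
  field_simp

lemma aux2 {K1 : ℝ → ℝ} (hm : Measurable K1)
    (hK1 : IntegrableOn (fun t : ℝ => t * K1 t) (Set.Ioi 0)) :
    ∫ t in Set.Ioi (0:ℝ), (∫ s in Set.Ioc 0 t, s ^ 2 * K1 s) / (2 * t ^ 2)
      = (1/2) * ∫ s in Set.Ioi (0:ℝ), s * K1 s := by
  set μ : Measure ℝ := volume.restrict (Set.Ioi 0) with hμ
  set f : ℝ → ℝ → ℝ := fun s t => if s ≤ t then s ^ 2 * K1 s / (2 * t ^ 2) else 0 with hf
  have hfs : ∀ s : ℝ, (fun t => f s t)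
      = Set.indicator (Set.Ici s) (fun t => s ^ 2 * K1 s / (2 * t ^ 2)) := by
    intro s; funext t
    simp only [hf, Set.indicator_apply, Set.mem_Ici]
  have hmeas : AEStronglyMeasurable (Function.uncurry f) (μ.prod μ) := by
    apply Measurable.aestronglyMeasurable
    apply Measurable.ite (measurableSet_le measurable_fst measurable_snd)
    · exact (((measurable_fst.pow_const 2).mul (hm.comp measurable_fst)).div
        ((measurable_snd.pow_const 2).const_mul 2))
    · exact measurable_const
  -- integrability on the product
  have hintf : Integrable (Function.uncurry f) (μ.prod μ) := by
    rw [MeasureTheory.integrable_prod_iff hmeas]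
    constructor
    · filter_upwards [ae_restrict_mem measurableSet_Ioi] with s hs
      rw [show (fun y => Function.uncurry f (s, y)) = fun t => f s t from rfl, hfs s]
      exact ((aux_IciInt (s ^ 2 * K1 s) s hs).integrable_indicator measurableSet_Ici).restrict
    · have hcong : ∀ᵐ s ∂μ, (∫ t, ‖Function.uncurry f (s, t)‖ ∂μ) = ‖s * K1 s‖ / 2 := by
        filter_upwards [ae_restrict_mem measurableSet_Ioi] with s hs
        have h1 : (fun t => ‖Function.uncurry f (s, t)‖)
            = Set.indicator (Set.Ici s) (fun t => |s ^ 2 * K1 s| / (2 * t ^ 2)) := by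
          funext t
          show ‖f s t‖ = _
          by_cases hst : s ≤ t
          · have ht0 : (0:ℝ) < t := lt_of_lt_of_le hs hst
            rw [Set.indicator_of_mem (Set.mem_Ici.2 hst)]
            simp only [hf, if_pos hst, Real.norm_eq_abs, abs_div,
              abs_of_pos (show (0:ℝ) < 2 * t ^ 2 by positivity)]
          · rw [Set.indicator_of_notMem (fun h => hst (Set.mem_Ici.1 h))]
            simp only [hf, if_neg hst, norm_zero]
        rw [h1, hμ, aux_Ici _ _ hs]
        have habs : |s ^ 2 * K1 s| = s * |s * K1 s| := by
          rw [show s ^ 2 * K1 s = s * (s * K1 s) by ring, abs_mul, abs_of_pos hs]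
        have hs0 : s ≠ 0 := ne_of_gt hs
        rw [habs, Real.norm_eq_abs]
        field_simp
      exact (hK1.norm.div_const 2).congr (Filter.EventuallyEq.symm hcong)
  -- swap
  have hswap := MeasureTheory.integral_integral_swap hintf
  -- LHS of swap : ∫ s, ∫ t, f s t
  have hL : (∫ s, (∫ t, f s t ∂μ) ∂μ) = (1/2) * ∫ s in Set.Ioi (0:ℝ), s * K1 s := by
    have hae : ∀ᵐ s ∂μ, (∫ t, f s t ∂μ) = (s * K1 s) / 2 := by
      filter_upwards [ae_restrict_mem measurableSet_Ioi] with s hs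
      rw [hfs s, hμ, aux_Ici _ _ hs]
      have hs' : s ≠ 0 := ne_of_gt hs
      field_simp
    rw [MeasureTheory.integral_congr_ae hae, MeasureTheory.integral_div]
    ring
  -- RHS of swap : ∫ t, ∫ s, f s t
  have hR : (∫ t, (∫ s, f s t ∂μ) ∂μ)
      = ∫ t in Set.Ioi (0:ℝ), (∫ s in Set.Ioc 0 t, s ^ 2 * K1 s) / (2 * t ^ 2) := by
    apply MeasureTheory.integral_congr_ae
    filter_upwards [ae_restrict_mem measurableSet_Ioi] with t ht
    have h1 : (fun s => f s t) = Set.indicator (Set.Iic t) (fun s => s ^ 2 * K1 s / (2 * t ^ 2)) := by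
      funext s
      simp only [hf, Set.indicator_apply, Set.mem_Iic]
    rw [h1, hμ, MeasureTheory.integral_indicator measurableSet_Iic,
      Measure.restrict_restrict measurableSet_Iic,
      show Set.Iic t ∩ Set.Ioi 0 = Set.Ioc 0 t by ext x; simp [Set.mem_Ioc, Set.mem_Iic, and_comm],
      MeasureTheory.integral_div]
  rw [← hL, hswap, hR]

open MeasureTheory Real Filter

theorem stmt10 (K1 K2 : ℝ → ℝ)
    (hderiv : ∀ t : ℝ, 0 < t →
      HasDerivAt (fun s : ℝ => s ^ 2 * K2 s) (-(t ^ 2 * K1 t)) t)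
    (hint : ∫ t in Set.Ioi (0 : ℝ), t * K1 t = π / 2)
    (hlim0 : Tendsto (fun t : ℝ => t ^ 2 * K2 t) (nhdsWithin 0 (Set.Ioi 0)) (nhds 2))
    (lam : ℝ) (hlam : 0 < lam) :
    ∫ y : EuclideanSpace ℝ (Fin 3),
      (1 - 1 / 2 * (Real.sqrt lam * ‖y‖) ^ 2 * K2 (Real.sqrt lam * ‖y‖)) / ‖y‖ ^ 4 =
      π ^ 2 * Real.sqrt lam := by
  have hπ : (0:ℝ) < π := Real.pi_pos
  have hK1 : IntegrableOn (fun t : ℝ => t * K1 t) (Set.Ioi 0) := by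
    by_contra h
    rw [MeasureTheory.integral_undef h] at hint
    nlinarith
  -- measurable representative of K1
  have hwmeas : StronglyMeasurable (hK1.1.mk _) := hK1.1.stronglyMeasurable_mk
  have hweq := hK1.1.ae_eq_mk
  set K1' : ℝ → ℝ := fun t => hK1.1.mk _ t / t with hK1'def
  have hK1'meas : Measurable K1' := hwmeas.measurable.div measurable_id
  have haeK : ∀ᵐ t ∂(volume.restrict (Set.Ioi 0)), t * K1 t = t * K1' t := by
    filter_upwards [hweq, ae_restrict_mem measurableSet_Ioi] with t h1 h2
    have ht : t ≠ 0 := ne_of_gt h2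
    simp only [hK1'def]
    rw [← h1]
    field_simp
  have hK1'int : IntegrableOn (fun t : ℝ => t * K1' t) (Set.Ioi 0) := hK1.congr haeK
  have hint' : (∫ t in Set.Ioi (0:ℝ), t * K1' t) = π / 2 := by
    rw [← hint]
    exact (MeasureTheory.integral_congr_ae haeK).symm
  -- Step B with K1'
  have hB : ∀ t : ℝ, 0 < t → t ^ 2 * K2 t = 2 - ∫ s in Set.Ioc 0 t, s ^ 2 * K1' s := by
    intro t ht
    rw [aux1 hderiv hlim0 hK1 ht]
    congr 1
    apply MeasureTheory.integral_congr_ae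
    have h0 : ∀ᵐ s ∂(volume.restrict (Set.Ioc 0 t)), s * K1 s = s * K1' s :=
      ae_restrict_of_ae_restrict_of_subset Set.Ioc_subset_Ioi_self haeK
    filter_upwards [h0, ae_restrict_mem measurableSet_Ioc] with s hs hs'
    have : K1 s = K1' s := by
      have := hs
      field_simp [ne_of_gt hs'.1] at this
      exact this
    rw [this]
  -- Fubini value
  have hfub := aux2 hK1'meas hK1'int
  rw [hint'] at hfub
  -- polar coordinates
  set f : ℝ → ℝ := fun r =>
    (1 - 1 / 2 * (Real.sqrt lam * r) ^ 2 * K2 (Real.sqrt lam * r)) / r ^ 4 with hfdef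
  have hpolar := MeasureTheory.integral_fun_norm_addHaar
    (volume : Measure (EuclideanSpace ℝ (Fin 3))) f
  rw [show (∫ y : EuclideanSpace ℝ (Fin 3),
      (1 - 1 / 2 * (Real.sqrt lam * ‖y‖) ^ 2 * K2 (Real.sqrt lam * ‖y‖)) / ‖y‖ ^ 4)
      = ∫ y : EuclideanSpace ℝ (Fin 3), f ‖y‖ from rfl, hpolar]
  rw [finrank_euclideanSpace_fin]
  -- volume of the unit ball
  have hball : ((volume (Metric.ball (0 : EuclideanSpace ℝ (Fin 3)) 1)).toReal) = π * (4/3) := by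
    rw [EuclideanSpace.volume_ball]
    have hΓ : Real.Gamma ((Fintype.card (Fin 3) : ℝ)/2 + 1) = 3/4 * Real.sqrt π := by
      rw [show ((Fintype.card (Fin 3) : ℝ)) = 3 by simp]
      rw [Real.Gamma_add_one (by norm_num)]
      rw [show (3:ℝ)/2 = 1/2 + 1 by norm_num, Real.Gamma_add_one (by norm_num),
        Real.Gamma_one_half_eq]
      ring
    rw [hΓ, ENNReal.ofReal_one, one_pow, one_mul, ENNReal.toReal_ofReal (by positivity),
      show (Fintype.card (Fin 3)) = 3 by simp]
    have h1 : Real.sqrt π ^ 3 = π * Real.sqrt π := by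
      rw [pow_succ, sq_sqrt Real.pi_pos.le]
    have h2 : Real.sqrt π ≠ 0 := by positivity
    rw [h1]
    field_simp
  rw [MeasureTheory.measureReal_def, hball]
  -- the radial integral
  have hsq : Real.sqrt lam * Real.sqrt lam = lam := Real.mul_self_sqrt hlam.le
  have hsl : (0:ℝ) < Real.sqrt lam := Real.sqrt_pos.2 hlam
  set G : ℝ → ℝ := fun u => (∫ s in Set.Ioc 0 u, s ^ 2 * K1' s) / (2 * u ^ 2) with hGdef
  have hrad : (∫ r in Set.Ioi (0:ℝ), r ^ (3 - 1) • f r)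
      = ∫ r in Set.Ioi (0:ℝ), lam * G (Real.sqrt lam * r) := by
    apply MeasureTheory.setIntegral_congr_fun measurableSet_Ioi
    intro r hr
    have hr0 : (0:ℝ) < r := hr
    have ht0 : (0:ℝ) < Real.sqrt lam * r := by positivity
    have hBt := hB _ ht0
    simp only [hfdef, hGdef, smul_eq_mul]
    rw [show (1 : ℝ) - 1 / 2 * (Real.sqrt lam * r) ^ 2 * K2 (Real.sqrt lam * r)
        = (∫ s in Set.Ioc 0 (Real.sqrt lam * r), s ^ 2 * K1' s) / 2 by
      rw [show (1:ℝ)/2 * (Real.sqrt lam * r) ^ 2 * K2 (Real.sqrt lam * r)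
          = 1/2 * ((Real.sqrt lam * r) ^ 2 * K2 (Real.sqrt lam * r)) by ring, hBt]
      ring]
    rw [mul_pow]
    field_simp
    rw [Real.sq_sqrt hlam.le]
    ring
  rw [hrad, MeasureTheory.integral_const_mul,
    MeasureTheory.integral_comp_mul_left_Ioi G 0 hsl, mul_zero]
  rw [show (∫ u in Set.Ioi (0:ℝ), G u) = 1/2 * (π/2) from hfub]
  -- final arithmetic
  rw [smul_eq_mul, smul_eq_mul, nsmul_eq_mul]
  have key : lam * (Real.sqrt lam)⁻¹ = Real.sqrt lam := by
    field_simp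
    rw [Real.sq_sqrt hlam.le]
  rw [show lam * ((Real.sqrt lam)⁻¹ * (1/2 * (π/2)))
      = lam * (Real.sqrt lam)⁻¹ * (1/2 * (π/2)) by ring, key]
  push_cast
  ring
end

section
/- The function z ↦ (1/z)·(1 - sinh(s₀ arctan(1/z))/sinh(s₀π/2)) defined for z > 0 attains its supremum as the limit z → 0⁺, which equals s₀·cosh(s₀π/2)/sinh(s₀π/2). -/
open Real Filter

private lemma sinh_slope_bounds (a b : ℝ) (h0 : 0 ≤ a) (hab : a ≤ b) :
    Real.cosh a * (b - a) ≤ Real.sinh b - Real.sinh a ∧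
      Real.sinh b - Real.sinh a ≤ Real.cosh b * (b - a) := by
  constructor
  · have hm : MonotoneOn (fun x => Real.sinh x - Real.cosh a * x) (Set.Icc a b) := by
      apply monotoneOn_of_deriv_nonneg (convex_Icc a b)
      · exact (Real.continuous_sinh.sub (continuous_const.mul continuous_id)).continuousOn
      · intro x hx
        exact ((Real.hasDerivAt_sinh x).sub
          ((hasDerivAt_id x).const_mul (Real.cosh a))).differentiableAt.differentiableWithinAt
      · intro x hx
        rw [interior_Icc] at hx
        have hd : deriv (fun x => Real.sinh x - Real.cosh a * x) x
            = Real.cosh x - Real.cosh a := by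
          have := (Real.hasDerivAt_sinh x).sub ((hasDerivAt_id x).const_mul (Real.cosh a))
          exact this.deriv.trans (by ring)
        rw [hd]
        have : Real.cosh a ≤ Real.cosh x := by
          rw [Real.cosh_le_cosh]
          rw [abs_of_nonneg h0, abs_of_nonneg (le_of_lt (lt_of_le_of_lt h0 hx.1))]
          exact hx.1.le
        linarith
    have := hm (Set.left_mem_Icc.mpr hab) (Set.right_mem_Icc.mpr hab) hab
    simp only at this
    nlinarith
  · have hm : MonotoneOn (fun x => Real.cosh b * x - Real.sinh x) (Set.Icc a b) := by
      apply monotoneOn_of_deriv_nonneg (convex_Icc a b)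
      · exact ((continuous_const.mul continuous_id).sub Real.continuous_sinh).continuousOn
      · intro x hx
        exact (((hasDerivAt_id x).const_mul (Real.cosh b)).sub
          (Real.hasDerivAt_sinh x)).differentiableAt.differentiableWithinAt
      · intro x hx
        rw [interior_Icc] at hx
        have hd : deriv (fun x => Real.cosh b * x - Real.sinh x) x
            = Real.cosh b - Real.cosh x := by
          have := ((hasDerivAt_id x).const_mul (Real.cosh b)).sub (Real.hasDerivAt_sinh x)
          exact this.deriv.trans (by ring)
        rw [hd]
        have : Real.cosh x ≤ Real.cosh b := by
          rw [Real.cosh_le_cosh]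
          rw [abs_of_nonneg (le_of_lt (lt_of_le_of_lt h0 hx.1)),
            abs_of_nonneg (h0.trans hab)]
          exact hx.2.le
        linarith
    have := hm (Set.left_mem_Icc.mpr hab) (Set.right_mem_Icc.mpr hab) hab
    simp only at this
    nlinarith

set_option maxHeartbeats 1000000 in
theorem stmt14 (s₀ : ℝ) (hs₀ : 0 < s₀) :
    Tendsto
      (fun z : ℝ =>
        (1 / z) * (1 - Real.sinh (s₀ * Real.arctan (1 / z)) / Real.sinh (s₀ * π / 2)))
      (nhdsWithin 0 (Set.Ioi 0))
      (nhds (s₀ * Real.cosh (s₀ * π / 2) / Real.sinh (s₀ * π / 2))) ∧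
    IsLUB
      ((fun z : ℝ =>
          (1 / z) * (1 - Real.sinh (s₀ * Real.arctan (1 / z)) / Real.sinh (s₀ * π / 2))) ''
        Set.Ioi 0)
      (s₀ * Real.cosh (s₀ * π / 2) / Real.sinh (s₀ * π / 2)) := by
  have hπ : 0 < π := Real.pi_pos
  set S : ℝ := Real.sinh (s₀ * π / 2) with hS_def
  have hS : 0 < S := by
    rw [hS_def, ← Real.sinh_zero]
    exact Real.sinh_lt_sinh.mpr (by positivity)
  set L : ℝ := s₀ * Real.cosh (s₀ * π / 2) / S with hL_def
  set f : ℝ → ℝ := fun z =>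
    (1 / z) * (1 - Real.sinh (s₀ * Real.arctan (1 / z)) / S) with hf_def
  -- basic facts about t = arctan(1/z) for z > 0
  have key : ∀ z : ℝ, 0 < z →
      Real.sin (Real.arctan (1 / z)) * s₀ * Real.cosh (s₀ * Real.arctan (1 / z)) / S ≤ f z
        ∧ f z ≤ L := by
    intro z hz
    set t := Real.arctan (1 / z) with ht_def
    have hw : 0 < 1 / z := by positivity
    have ht0 : 0 < t := by
      rw [ht_def, ← Real.arctan_zero]
      exact Real.arctan_strictMono hw
    have ht2 : t < π / 2 := Real.arctan_lt_pi_div_two _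
    have htan : Real.tan t = 1 / z := Real.tan_arctan _
    have hcost : 0 < Real.cos t := Real.cos_arctan_pos _
    have hsint : 0 < Real.sin t := Real.sin_pos_of_pos_of_lt_pi ht0 (by linarith)
    -- slope bounds
    obtain ⟨hlow, hhigh⟩ := sinh_slope_bounds (s₀ * t) (s₀ * π / 2)
      (by positivity) (by nlinarith)
    -- tan inequalities via u = π/2 - t; use sin/cos directly
    have hsin_eq : Real.sin t = Real.cos (π / 2 - t) := by
      rw [Real.cos_pi_div_two_sub]
    have hcos_eq : Real.cos t = Real.sin (π / 2 - t) := by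
      rw [Real.sin_pi_div_two_sub]
    set u := π / 2 - t with hu_def
    have hu0 : 0 < u := by simp [hu_def]; linarith
    have hu2 : u < π / 2 := by simp [hu_def]; linarith
    -- u < tan u  and  sin u ≤ u
    have h1 : u < Real.tan u := Real.lt_tan hu0 hu2
    have h2 : Real.sin u ≤ u := Real.sin_le hu0.le
    have hcosu : 0 < Real.cos u := Real.cos_pos_of_mem_Ioo ⟨by linarith, hu2⟩
    rw [Real.tan_eq_sin_div_cos] at h1
    -- tan t * u bounds:  cos u ≤ (sin t / cos t) * u ≤ 1
    have htanu_le : (Real.sin t / Real.cos t) * u ≤ 1 := by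
      rw [hsin_eq, hcos_eq, div_mul_eq_mul_div, div_le_one (by rwa [← hcos_eq])]
      have : u * Real.cos u ≤ Real.sin u := by
        rw [lt_div_iff₀ hcosu] at h1
        linarith
      linarith [this]
    have htanu_ge : Real.cos u ≤ (Real.sin t / Real.cos t) * u := by
      rw [hsin_eq, hcos_eq, div_mul_eq_mul_div, le_div_iff₀ (by rwa [← hcos_eq])]
      nlinarith [hcosu]
    -- rewrite f z
    have hfz : f z = (Real.sin t / Real.cos t) * ((S - Real.sinh (s₀ * t)) / S) := by
      show (1 / z) * (1 - Real.sinh (s₀ * t) / S) = _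
      rw [← htan, Real.tan_eq_sin_div_cos, one_sub_div hS.ne']
    clear_value t u
    have hsinh_le : Real.sinh (s₀ * t) ≤ S := by
      rw [hS_def]
      exact Real.sinh_le_sinh.mpr (by nlinarith)
    constructor
    · -- lower bound
      rw [hfz]
      have e1 : s₀ * Real.cosh (s₀ * t) * u ≤ S - Real.sinh (s₀ * t) := by
        have : s₀ * π / 2 - s₀ * t = s₀ * u := by rw [hu_def]; ring
        rw [hS_def]; nlinarith [hlow]
      have hct : 0 < Real.cosh (s₀ * t) := Real.cosh_pos _
      have h3 : Real.cos u * (s₀ * Real.cosh (s₀ * t)) ≤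
          (Real.sin t / Real.cos t) * u * (s₀ * Real.cosh (s₀ * t)) := by
        apply mul_le_mul_of_nonneg_right htanu_ge (by positivity)
      have h4 : (Real.sin t / Real.cos t) * u * (s₀ * Real.cosh (s₀ * t)) ≤
          (Real.sin t / Real.cos t) * (S - Real.sinh (s₀ * t)) := by
        have hnn : 0 ≤ Real.sin t / Real.cos t := by positivity
        calc (Real.sin t / Real.cos t) * u * (s₀ * Real.cosh (s₀ * t))
            = (Real.sin t / Real.cos t) * (s₀ * Real.cosh (s₀ * t) * u) := by ring
          _ ≤ (Real.sin t / Real.cos t) * (S - Real.sinh (s₀ * t)) :=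
              mul_le_mul_of_nonneg_left e1 hnn
      rw [← hsin_eq] at h3
      have hrw : Real.sin t / Real.cos t * ((S - Real.sinh (s₀ * t)) / S)
          = (Real.sin t / Real.cos t * (S - Real.sinh (s₀ * t))) / S := by ring
      rw [hrw, div_le_div_iff_of_pos_right hS]
      nlinarith [h3.trans h4]
    · -- upper bound
      rw [hfz, hL_def]
      have e2 : S - Real.sinh (s₀ * t) ≤ s₀ * Real.cosh (s₀ * π / 2) * u := by
        have : s₀ * π / 2 - s₀ * t = s₀ * u := by rw [hu_def]; ring
        rw [hS_def]; nlinarith [hhigh]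
      have hcb : 0 < Real.cosh (s₀ * π / 2) := Real.cosh_pos _
      have hnn : 0 ≤ Real.sin t / Real.cos t := by positivity
      have h4 : (Real.sin t / Real.cos t) * (S - Real.sinh (s₀ * t)) ≤
          (Real.sin t / Real.cos t) * u * (s₀ * Real.cosh (s₀ * π / 2)) := by
        calc (Real.sin t / Real.cos t) * (S - Real.sinh (s₀ * t))
            ≤ (Real.sin t / Real.cos t) * (s₀ * Real.cosh (s₀ * π / 2) * u) :=
              mul_le_mul_of_nonneg_left e2 hnn
          _ = (Real.sin t / Real.cos t) * u * (s₀ * Real.cosh (s₀ * π / 2)) := by ring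
      have h5 : (Real.sin t / Real.cos t) * u * (s₀ * Real.cosh (s₀ * π / 2)) ≤
          s₀ * Real.cosh (s₀ * π / 2) := by
        nlinarith [htanu_le, mul_pos hs₀ hcb]
      have hrw : Real.sin t / Real.cos t * ((S - Real.sinh (s₀ * t)) / S)
          = (Real.sin t / Real.cos t * (S - Real.sinh (s₀ * t))) / S := by ring
      rw [hrw, div_le_div_iff_of_pos_right hS]
      nlinarith [h4.trans h5]
  -- the lower comparison function tends to L
  have harctan : Tendsto (fun z : ℝ => Real.arctan (1 / z)) (nhdsWithin 0 (Set.Ioi 0))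
      (nhds (π / 2)) := by
    have h1 : Tendsto (fun z : ℝ => 1 / z) (nhdsWithin 0 (Set.Ioi 0)) atTop := by
      simpa [one_div] using (tendsto_inv_nhdsGT_zero : Tendsto (fun x : ℝ => x⁻¹) _ _)
    exact (Real.tendsto_arctan_atTop.mono_right nhdsWithin_le_nhds).comp h1
  have hg : Tendsto
      (fun z : ℝ => Real.sin (Real.arctan (1 / z)) * s₀ *
        Real.cosh (s₀ * Real.arctan (1 / z)) / S)
      (nhdsWithin 0 (Set.Ioi 0)) (nhds L) := by
    have hcont : Continuous (fun t : ℝ => Real.sin t * s₀ * Real.cosh (s₀ * t) / S) :=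
      ((Real.continuous_sin.mul continuous_const).mul
        (Real.continuous_cosh.comp (continuous_const.mul continuous_id))).div_const S
    have h := (hcont.tendsto (π / 2)).comp harctan
    have hval : Real.sin (π / 2) * s₀ * Real.cosh (s₀ * (π / 2)) / S = L := by
      rw [Real.sin_pi_div_two, hL_def, mul_div_assoc s₀ π 2]
      ring
    rw [hval] at h
    exact h
  have htendsto : Tendsto f (nhdsWithin 0 (Set.Ioi 0)) (nhds L) := by
    apply tendsto_of_tendsto_of_tendsto_of_le_of_le' hg tendsto_const_nhds
    · filter_upwards [self_mem_nhdsWithin] with z hz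
      exact (key z hz).1
    · filter_upwards [self_mem_nhdsWithin] with z hz
      exact (key z hz).2
  refine ⟨htendsto, ?_, ?_⟩
  · rintro y ⟨z, hz, rfl⟩
    exact (key z hz).2
  · intro b hb
    refine le_of_tendsto htendsto ?_
    filter_upwards [self_mem_nhdsWithin] with z hz
    exact hb ⟨z, hz, rfl⟩
end

section
/- The equation -s·cosh(πs/2) + (8/√3)·sinh(πs/6) = 0 has a unique positive solution s₀, and s₀ ∈ (1, 1.01). -/
open Real

noncomputable def F : ℝ → ℝ := fun s => -s * Real.cosh (π * s / 2) + 8 / Real.sqrt 3 * Real.sinh (π * s / 6)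

noncomputable def F' : ℝ → ℝ := fun s =>
  (-1 * Real.cosh (π * s / 2) + -s * (Real.sinh (π * s / 2) * (π / 2))) +
    8 / Real.sqrt 3 * (Real.cosh (π * s / 6) * (π / 6))

noncomputable def F'' : ℝ → ℝ := fun s =>
  -π * Real.sinh (π * s / 2) - s * (π / 2) ^ 2 * Real.cosh (π * s / 2) +
    8 / Real.sqrt 3 * (π / 6) ^ 2 * Real.sinh (π * s / 6)

lemma sqrt3_gt : (1.7320508 : ℝ) < Real.sqrt 3 := by
  have h := Real.sq_sqrt (show (0:ℝ) ≤ 3 by norm_num)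
  have h2 := Real.sqrt_nonneg 3
  nlinarith

lemma sqrt3_lt : Real.sqrt 3 < (1.7320509 : ℝ) := by
  have h := Real.sq_sqrt (show (0:ℝ) ≤ 3 by norm_num)
  have h2 := Real.sqrt_nonneg 3
  nlinarith

lemma exp_t_gt : (1.6880915 : ℝ) < Real.exp (π / 6) := by
  have h : (3141592:ℝ)/6000000 ≤ π/6 := by
    have := Real.pi_gt_d6; linarith
  have h1 := Real.sum_le_exp_of_nonneg (x := (3141592:ℝ)/6000000) (by norm_num) 9
  have h2 : Real.exp ((3141592:ℝ)/6000000) ≤ Real.exp (π/6) := Real.exp_le_exp.2 h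
  refine lt_of_lt_of_le ?_ (h1.trans h2)
  norm_num [Finset.sum_range_succ, Nat.factorial]

lemma exp_t_lt : Real.exp (π / 6) < (1.6880920 : ℝ) := by
  have h : π/6 ≤ (3141593:ℝ)/6000000 := by
    have := Real.pi_lt_d6; linarith
  have h1 := Real.exp_bound' (x := (3141593:ℝ)/6000000) (by norm_num) (by norm_num) (n := 9) (by norm_num)
  have h2 : Real.exp (π/6) ≤ Real.exp ((3141593:ℝ)/6000000) := Real.exp_le_exp.2 h
  refine lt_of_le_of_lt (h2.trans h1) ?_
  norm_num [Finset.sum_range_succ, Nat.factorial]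

lemma exp_u_gt : (1.6969535 : ℝ) < Real.exp (π * 1.01 / 6) := by
  have h : (317300792:ℝ)/600000000 ≤ π * 1.01 / 6 := by
    have := Real.pi_gt_d6; nlinarith
  have h1 := Real.sum_le_exp_of_nonneg (x := (317300792:ℝ)/600000000) (by norm_num) 9
  have h2 : Real.exp ((317300792:ℝ)/600000000) ≤ Real.exp (π * 1.01 / 6) := Real.exp_le_exp.2 h
  refine lt_of_lt_of_le ?_ (h1.trans h2)
  norm_num [Finset.sum_range_succ, Nat.factorial]

lemma exp_u_lt : Real.exp (π * 1.01 / 6) < (1.6969541 : ℝ) := by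
  have h : π * 1.01 / 6 ≤ (317300893:ℝ)/600000000 := by
    have := Real.pi_lt_d6; nlinarith
  have h1 := Real.exp_bound' (x := (317300893:ℝ)/600000000) (by norm_num) (by norm_num) (n := 9) (by norm_num)
  have h2 : Real.exp (π * 1.01 / 6) ≤ Real.exp ((317300893:ℝ)/600000000) := Real.exp_le_exp.2 h
  refine lt_of_le_of_lt (h2.trans h1) ?_
  norm_num [Finset.sum_range_succ, Nat.factorial]

lemma F1_pos : 0 < F 1 := by
  have ht1 := exp_t_gt
  have ht2 := exp_t_lt
  set t := Real.exp (π / 6) with htdef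
  have htpos : 0 < t := Real.exp_pos _
  have hexp3 : Real.exp (π * 1 / 2) = t ^ 3 := by
    rw [show π * 1 / 2 = π/6 + π/6 + π/6 by ring, Real.exp_add, Real.exp_add]; ring
  have hexp1 : Real.exp (π * 1 / 6) = t := by norm_num [htdef]
  have hcosh : Real.cosh (π * 1 / 2) = (t ^ 3 + (t ^ 3)⁻¹) / 2 := by
    rw [Real.cosh_eq, Real.exp_neg, hexp3]
  have hsinh : Real.sinh (π * 1 / 6) = (t - t⁻¹) / 2 := by
    rw [Real.sinh_eq, Real.exp_neg, hexp1]
  have hinv : t⁻¹ < 0.5923851 := by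
    have := mul_inv_cancel₀ (ne_of_gt htpos)
    nlinarith [inv_pos.2 htpos]
  have ht3lo : (4.8104748 : ℝ) < t ^ 3 := by
    have h := sub_pos.2 ht1
    nlinarith [mul_pos (mul_pos h h) h, mul_pos h h]
  have ht3hi : t ^ 3 < (4.8104792 : ℝ) := by
    have h := sub_pos.2 ht2
    nlinarith [mul_pos (mul_pos h h) h, mul_pos h h, mul_pos (mul_pos htpos h) h,
      mul_pos (mul_pos htpos htpos) h]
  have hinv3 : (t ^ 3)⁻¹ < 0.2078797 := by
    have := mul_inv_cancel₀ (ne_of_gt (pow_pos htpos 3))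
    nlinarith [inv_pos.2 (pow_pos htpos 3)]
  have hC : (4.6188019 : ℝ) < 8 / Real.sqrt 3 := by
    rw [lt_div_iff₀ (by positivity)]
    linarith [sqrt3_lt]
  have hd : (1.0957064 : ℝ) < t - t⁻¹ := by linarith
  have hCD : (4.6188019 : ℝ) * 1.0957064 < 8 / Real.sqrt 3 * (t - t⁻¹) := by
    nlinarith [mul_pos (sub_pos.2 hC) (sub_pos.2 hd)]
  simp only [F, hcosh, hsinh]
  nlinarith [hCD]

lemma F101_neg : F 1.01 < 0 := by
  have hu1 := exp_u_gt
  have hu2 := exp_u_lt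
  set u := Real.exp (π * 1.01 / 6) with hudef
  have hupos : 0 < u := Real.exp_pos _
  have hexp3 : Real.exp (π * 1.01 / 2) = u ^ 3 := by
    rw [show π * 1.01 / 2 = π * 1.01/6 + π * 1.01/6 + π * 1.01/6 by ring, Real.exp_add,
      Real.exp_add]; ring
  have hcosh : Real.cosh (π * 1.01 / 2) = (u ^ 3 + (u ^ 3)⁻¹) / 2 := by
    rw [Real.cosh_eq, Real.exp_neg, hexp3]
  have hsinh : Real.sinh (π * 1.01 / 6) = (u - u⁻¹) / 2 := by
    rw [Real.sinh_eq, Real.exp_neg]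
  have hinv : (0.5892911 : ℝ) < u⁻¹ := by
    have := mul_inv_cancel₀ (ne_of_gt hupos)
    nlinarith [inv_pos.2 hupos]
  have hu3lo : (4.8866341 : ℝ) < u ^ 3 := by
    have h := sub_pos.2 hu1
    nlinarith [mul_pos (mul_pos h h) h, mul_pos h h]
  have hu3hi : u ^ 3 < (4.8866394 : ℝ) := by
    have h := sub_pos.2 hu2
    nlinarith [mul_pos (mul_pos h h) h, mul_pos h h, mul_pos (mul_pos hupos h) h,
      mul_pos (mul_pos hupos hupos) h]
  have hinv3 : (0.2046396 : ℝ) < (u ^ 3)⁻¹ := by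
    have := mul_inv_cancel₀ (ne_of_gt (pow_pos hupos 3))
    nlinarith [inv_pos.2 (pow_pos hupos 3)]
  have hC : 8 / Real.sqrt 3 < (4.6188025 : ℝ) := by
    rw [div_lt_iff₀ (by positivity)]
    linarith [sqrt3_gt]
  have hCpos : 0 < 8 / Real.sqrt 3 := by positivity
  have hd : u - u⁻¹ < (1.1076630 : ℝ) := by linarith
  have hdpos : 0 < u - u⁻¹ := by
    nlinarith [mul_inv_cancel₀ (ne_of_gt hupos), inv_pos.2 hupos]
  have hCD : 8 / Real.sqrt 3 * (u - u⁻¹) < (4.6188025 : ℝ) * 1.1076630 := by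
    nlinarith [mul_pos (sub_pos.2 hC) (sub_pos.2 hd)]
  simp only [F, hcosh, hsinh]
  nlinarith [hCD]

lemma hasDerivAt_F (x : ℝ) : HasDerivAt F (F' x) x := by
  have h2 : HasDerivAt (fun s : ℝ => π * s / 2) (π / 2) x := by
    simpa using ((hasDerivAt_id x).const_mul π).div_const 2
  have h6 : HasDerivAt (fun s : ℝ => π * s / 6) (π / 6) x := by
    simpa using ((hasDerivAt_id x).const_mul π).div_const 6
  have hneg : HasDerivAt (fun s : ℝ => -s) (-1) x := (hasDerivAt_id x).neg
  exact (hneg.mul h2.cosh).add (h6.sinh.const_mul (8 / Real.sqrt 3))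

lemma hasDerivAt_F' (x : ℝ) : HasDerivAt F' (F'' x) x := by
  have h2 : HasDerivAt (fun s : ℝ => π * s / 2) (π / 2) x := by
    simpa using ((hasDerivAt_id x).const_mul π).div_const 2
  have h6 : HasDerivAt (fun s : ℝ => π * s / 6) (π / 6) x := by
    simpa using ((hasDerivAt_id x).const_mul π).div_const 6
  have hneg : HasDerivAt (fun s : ℝ => -s) (-1) x := (hasDerivAt_id x).neg
  have t1 : HasDerivAt (fun s : ℝ => -1 * Real.cosh (π * s / 2))
      (-1 * (Real.sinh (π * x / 2) * (π / 2))) x := h2.cosh.const_mul (-1)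
  have t2 : HasDerivAt (fun s : ℝ => -s * (Real.sinh (π * s / 2) * (π / 2)))
      (-1 * (Real.sinh (π * x / 2) * (π / 2)) +
        -x * (Real.cosh (π * x / 2) * (π / 2) * (π / 2))) x :=
    hneg.mul (h2.sinh.mul_const (π / 2))
  have t3 : HasDerivAt (fun s : ℝ => 8 / Real.sqrt 3 * (Real.cosh (π * s / 6) * (π / 6)))
      (8 / Real.sqrt 3 * (Real.sinh (π * x / 6) * (π / 6) * (π / 6))) x :=
    (h6.cosh.mul_const (π / 6)).const_mul (8 / Real.sqrt 3)
  have := (t1.add t2).add t3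
  refine this.congr_deriv ?_
  simp only [F'']
  ring

lemma F''_neg : ∀ x ∈ interior (Set.Ici (0:ℝ)), deriv^[2] F x < 0 := by
  intro x hx
  rw [interior_Ici, Set.mem_Ioi] at hx
  have hderiv : deriv F = F' := funext fun y => (hasDerivAt_F y).deriv
  have h2 : deriv^[2] F x = F'' x := by
    show deriv (deriv F) x = F'' x
    rw [hderiv]
    exact (hasDerivAt_F' x).deriv
  rw [h2]
  have hb : 0 < Real.sinh (π * x / 6) := Real.sinh_pos_iff.2 (by positivity)
  have hkey : Real.sinh (π * x / 2) =
      4 * Real.sinh (π * x / 6) ^ 3 + 3 * Real.sinh (π * x / 6) := by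
    rw [show π * x / 2 = 3 * (π * x / 6) by ring, Real.sinh_three_mul]
  have hcosh : 0 < Real.cosh (π * x / 2) := Real.cosh_pos _
  have hπ1 : (3.141592 : ℝ) < π := Real.pi_gt_d6
  have hπ2 : π < (3.141593 : ℝ) := Real.pi_lt_d6
  have hC : 8 / Real.sqrt 3 < (4.62 : ℝ) := by
    rw [div_lt_iff₀ (by positivity)]
    linarith [sqrt3_gt]
  have hCpos : 0 < 8 / Real.sqrt 3 := by positivity
  have h1 : 8 / Real.sqrt 3 * (π / 6) ^ 2 < 1.27 := by nlinarith
  have h1b : 8 / Real.sqrt 3 * (π / 6) ^ 2 * Real.sinh (π * x / 6) <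
      1.27 * Real.sinh (π * x / 6) := by nlinarith
  simp only [F'']
  rw [hkey]
  nlinarith [pow_pos hb 3, mul_pos hx hcosh,
    mul_nonneg (sq_nonneg (π / 2)) (mul_pos hx hcosh).le,
    mul_pos (sub_pos.2 hπ1) hb,
    mul_pos (show (0:ℝ) < π by linarith) (pow_pos hb 3)]

lemma F_concave : StrictConcaveOn ℝ (Set.Ici 0) F := by
  apply strictConcaveOn_of_deriv2_neg (convex_Ici 0) _ F''_neg
  refine Continuous.continuousOn ?_
  unfold F
  fun_prop

lemma F0 : F 0 = 0 := by norm_num [F]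

lemma conc_mid {x y z : ℝ} (hx : 0 ≤ x) (hxy : x < y) (hyz : y < z)
    (hfx : 0 ≤ F x) (hfz : 0 ≤ F z) : 0 < F y := by
  have hconc := F_concave
  have hzx : 0 < z - x := by linarith
  have ha : 0 < (z - y) / (z - x) := div_pos (by linarith) hzx
  have hb : 0 < (y - x) / (z - x) := div_pos (by linarith) hzx
  have hab : (z - y) / (z - x) + (y - x) / (z - x) = 1 := by
    rw [← add_div, div_eq_one_iff_eq hzx.ne']
    ring
  have h := hconc.2 (Set.mem_Ici.2 hx) (Set.mem_Ici.2 (by linarith : (0:ℝ) ≤ z))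
    (ne_of_lt (hxy.trans hyz)) ha hb hab
  have hcomb : ((z - y) / (z - x)) • x + ((y - x) / (z - x)) • z = y := by
    simp only [smul_eq_mul]
    rw [div_mul_eq_mul_div, div_mul_eq_mul_div, ← add_div, div_eq_iff hzx.ne']
    ring
  rw [hcomb] at h
  simp only [smul_eq_mul] at h
  nlinarith [mul_nonneg ha.le hfx, mul_nonneg hb.le hfz]

lemma zeros_loc : ∀ s : ℝ, 0 < s → F s = 0 → 1 < s ∧ s < 1.01 := by
  intro s hs hFs
  have h1 : 1 < s := by
    rcases lt_trichotomy s 1 with h | h | h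
    · exfalso
      have := conc_mid (le_refl 0) hs h F0.ge F1_pos.le
      linarith [this.ne' hFs]
    · exfalso; rw [h] at hFs; linarith [F1_pos]
    · exact h
  refine ⟨h1, ?_⟩
  by_contra hge
  push_neg at hge
  rcases eq_or_lt_of_le hge with h | h
  · rw [← h] at hFs; linarith [F101_neg]
  · have := conc_mid (by norm_num : (0:ℝ) ≤ 1) (by norm_num : (1:ℝ) < 1.01) h F1_pos.le hFs.ge
    linarith [F101_neg]

lemma F_uniq {p q : ℝ} (hp : 0 < p) (hFp : F p = 0) (hq : 0 < q) (hFq : F q = 0) : p = q := by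
  by_contra hne
  rcases lt_or_gt_of_ne hne with h | h
  · have := conc_mid (le_refl 0) hp h F0.ge hFq.ge
    linarith
  · have := conc_mid (le_refl 0) hq h F0.ge hFp.ge
    linarith

theorem stmt15 :
    (∃! s : ℝ, 0 < s ∧
      -s * Real.cosh (π * s / 2) + (8 / Real.sqrt 3) * Real.sinh (π * s / 6) = 0) ∧
    ∀ s : ℝ, 0 < s →
      -s * Real.cosh (π * s / 2) + (8 / Real.sqrt 3) * Real.sinh (π * s / 6) = 0 →
      1 < s ∧ s < 1.01 := by
  have hFeq : ∀ s : ℝ,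
      (-s * Real.cosh (π * s / 2) + (8 / Real.sqrt 3) * Real.sinh (π * s / 6)) = F s :=
    fun s => rfl
  have hcont : Continuous F := by unfold F; fun_prop
  have hmem : (0:ℝ) ∈ Set.Ioo (F 1.01) (F 1) := ⟨F101_neg, F1_pos⟩
  have himage := intermediate_value_Ioo' (by norm_num : (1:ℝ) ≤ 1.01) hcont.continuousOn hmem
  obtain ⟨s, hs, hFs⟩ := himage
  constructor
  · refine ⟨s, ⟨by linarith [hs.1], by rw [hFeq]; exact hFs⟩, ?_⟩
    rintro y ⟨hy, hFy⟩
    rw [hFeq] at hFy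
    exact F_uniq hy hFy (by linarith [hs.1]) hFs
  · intro s' hs' h
    rw [hFeq] at h
    exact zeros_loc s' hs' h
end
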